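/- arXiv:1311.1176 — 7 statements merged into one kernel-verified Lean document; each statement's English description precedes it below -/
import Mathlib

section
/- The Weierstrass function u₀(x) = ∑_{n=0}^∞ aⁿ cos(bⁿ x), with 0 < a < 1, b an odd integer, and ab > 1 + 3π/2, is not differentiable at any point of ℝ. -/
open Real Filter Topology

private lemma wcos_lip (u v : ℝ) : |Real.cos u - Real.cos v| ≤ |u - v| := by
  rw [Real.cos_sub_cos]
  have h1 : |Real.sin ((u + v) / 2)| ≤ 1 := abs_sin_le_one _
  have h2 : |Real.sin ((u - v) / 2)| ≤ |(u - v) / 2| := Real.abs_sin_le_abs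
  calc |-2 * Real.sin ((u + v) / 2) * Real.sin ((u - v) / 2)|
      = 2 * (|Real.sin ((u + v) / 2)| * |Real.sin ((u - v) / 2)|) := by
        rw [abs_mul, abs_mul]; norm_num; ring
    _ ≤ 2 * (1 * |(u - v) / 2|) := by
        gcongr
    _ = |u - v| := by rw [abs_div, abs_two]; ring

private lemma wsummable (a : ℝ) (ha : 0 ≤ a) (ha1 : a < 1) (g : ℕ → ℝ)
    (hg : ∀ n, |g n| ≤ 1) : Summable (fun n => a ^ n * g n) := by
  apply Summable.of_norm_bounded (summable_geometric_of_lt_one ha ha1)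
  intro n
  rw [Real.norm_eq_abs, abs_mul, abs_pow, abs_of_nonneg ha]
  calc a ^ n * |g n| ≤ a ^ n * 1 := by gcongr; exact hg n
    _ = a ^ n := mul_one _

private lemma weier_key (a : ℝ) (b : ℕ) (ha : 0 < a) (ha1 : a < 1) (hodd : Odd b)
    (hab1 : 1 < a * b) (x : ℝ) (m : ℕ) :
    ∃ y : ℝ, 0 < y - x ∧ y - x ≤ 3 * Real.pi / 2 / (b : ℝ) ^ m ∧
      a ^ m - (y - x) * ((a * b) ^ m / (a * b - 1)) ≤
        |(∑' n : ℕ, a ^ n * Real.cos ((b : ℝ) ^ n * y)) -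
          ∑' n : ℕ, a ^ n * Real.cos ((b : ℝ) ^ n * x)| := by
  have hπ := Real.pi_pos
  have hb0 : (0 : ℝ) < b := by nlinarith
  have hbm : (0 : ℝ) < (b : ℝ) ^ m := by positivity
  set α : ℤ := round ((b : ℝ) ^ m * x / π) with hα
  set ε : ℝ := (b : ℝ) ^ m * x - α * π with hεdef
  have hε : |ε| ≤ π / 2 := by
    have h := abs_sub_round ((b : ℝ) ^ m * x / π)
    have he : ε = ((b : ℝ) ^ m * x / π - α) * π := by
      field_simp [hεdef]
      ring
    rw [he, abs_mul, abs_of_pos hπ]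
    calc |(b : ℝ) ^ m * x / π - α| * π ≤ 1 / 2 * π := by gcongr
      _ = π / 2 := by ring
  have hεlo : -(π / 2) ≤ ε := (abs_le.1 hε).1
  have hεhi : ε ≤ π / 2 := (abs_le.1 hε).2
  set y : ℝ := ((α : ℝ) + 1) * π / (b : ℝ) ^ m with hy
  have hyx : y - x = (π - ε) / (b : ℝ) ^ m := by
    rw [hy, hεdef]; field_simp; ring
  refine ⟨y, ?_, ?_, ?_⟩
  · rw [hyx]; apply div_pos (by linarith) hbm
  · rw [hyx]; gcongr; linarith
  -- main estimate
  have hsum : ∀ z : ℝ, Summable (fun n => a ^ n * Real.cos ((b : ℝ) ^ n * z)) := fun z =>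
    wsummable a ha.le ha1 _ (fun n => Real.abs_cos_le_one _)
  set Δ : ℕ → ℝ := fun n =>
    a ^ n * Real.cos ((b : ℝ) ^ n * y) - a ^ n * Real.cos ((b : ℝ) ^ n * x) with hΔ
  have hΔsum : Summable Δ := (hsum y).sub (hsum x)
  have htsum : (∑' n : ℕ, a ^ n * Real.cos ((b : ℝ) ^ n * y)) -
      (∑' n : ℕ, a ^ n * Real.cos ((b : ℝ) ^ n * x)) = ∑' n, Δ n :=
    (Summable.tsum_sub (hsum y) (hsum x)).symm
  have hsplit : ∑' n, Δ n = (∑ n ∈ Finset.range m, Δ n) + ∑' n, Δ (n + m) :=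
    (Summable.sum_add_tsum_nat_add m hΔsum).symm
  -- sign s = (-1)^α
  set s : ℝ := (-1 : ℝ) ^ α with hs
  have hs1 : s = 1 ∨ s = -1 := by
    rcases Int.even_or_odd α with h | h
    · left; exact h.neg_one_zpow
    · right; exact h.neg_one_zpow
  have hsabs : |s| = 1 := by rcases hs1 with h | h <;> rw [h] <;> norm_num
  -- odd powers
  have hoddpow : ∀ n : ℕ, ((-1 : ℝ) : ℝ) ^ ((b : ℤ) ^ n) = -1 := by
    intro n
    have : ((b : ℤ) ^ n) = ((b ^ n : ℕ) : ℤ) := by push_cast; ring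
    rw [this, zpow_natCast]
    exact (hodd.pow).neg_one_pow
  -- tail term computation
  set c : ℕ → ℝ := fun n => Real.cos ((b : ℝ) ^ n * ε) with hc
  have htail_term : ∀ n : ℕ, Δ (n + m) = -s * (a ^ (n + m) * (1 + c n)) := by
    intro n
    have hby : (b : ℝ) ^ (n + m) * y = 0 + ((b : ℤ) ^ n * (α + 1) : ℤ) * π := by
      rw [hy]; push_cast; field_simp; ring
    have hbx : (b : ℝ) ^ (n + m) * x = (b : ℝ) ^ n * ε + ((b : ℤ) ^ n * α : ℤ) * π := by
      have hx' : (b : ℝ) ^ m * x = α * π + ε := by rw [hεdef]; ring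
      have : (b : ℝ) ^ (n + m) * x = (b : ℝ) ^ n * ((b : ℝ) ^ m * x) := by ring
      rw [this, hx']; push_cast; ring
    have h1 : Real.cos ((b : ℝ) ^ (n + m) * y) = -s := by
      rw [hby, Real.cos_add_int_mul_pi, Real.cos_zero, mul_one,
        zpow_mul, hoddpow, hs]
      rw [show ((-1 : ℝ)) ^ (α + 1) = (-1 : ℝ) ^ α * (-1 : ℝ) ^ (1 : ℤ) from
        zpow_add₀ (by norm_num) α 1]
      norm_num
    have h2 : Real.cos ((b : ℝ) ^ (n + m) * x) = s * c n := by
      rw [hbx, Real.cos_add_int_mul_pi, zpow_mul, hoddpow, hs, hc]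
    rw [hΔ]; simp only []
    rw [h1, h2]; ring
  -- tail sum
  set h : ℕ → ℝ := fun n => a ^ (n + m) * (1 + c n) with hh
  have hhnn : ∀ n, 0 ≤ h n := by
    intro n
    have := Real.neg_one_le_cos ((b : ℝ) ^ n * ε)
    have : 0 ≤ 1 + c n := by rw [hc]; linarith
    positivity
  have hhsum : Summable h := by
    refine Summable.of_nonneg_of_le hhnn (fun n => ?_)
      (((summable_geometric_of_lt_one ha.le ha1).mul_left 2).mul_left (a ^ m))
    have hcle := Real.cos_le_one ((b : ℝ) ^ n * ε)
    have hpa : a ^ (n + m) = a ^ m * a ^ n := by rw [pow_add]; ring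
    rw [hh]; simp only []
    rw [hpa]
    have han : (0:ℝ) ≤ a ^ n := by positivity
    have ham : (0:ℝ) ≤ a ^ m := by positivity
    have hc1 : c n ≤ 1 := by rw [hc]; exact hcle
    nlinarith [hc1, mul_nonneg ham han]
  have hc0 : 0 ≤ c 0 := by
    rw [hc]; simp only [pow_zero, one_mul]
    exact Real.cos_nonneg_of_mem_Icc ⟨hεlo, hεhi⟩
  have hfirst : a ^ m ≤ h 0 := by
    rw [hh]; simp only [zero_add]
    nlinarith [pow_pos ha m]
  have hT : a ^ m ≤ ∑' n, h n :=
    le_trans hfirst (Summable.le_tsum hhsum 0 (fun j _ => hhnn j))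
  have htail : ∑' n, Δ (n + m) = -s * ∑' n, h n := by
    rw [← tsum_mul_left]
    exact tsum_congr htail_term
  have htail_abs : a ^ m ≤ |∑' n, Δ (n + m)| := by
    rw [htail, abs_mul, abs_neg, hsabs, one_mul,
      abs_of_nonneg (tsum_nonneg hhnn)]
    exact hT
  -- head estimate
  have hyx_pos : 0 < y - x := by rw [hyx]; apply div_pos (by linarith) hbm
  have hhead : |∑ n ∈ Finset.range m, Δ n| ≤ (y - x) * ((a * b) ^ m / (a * b - 1)) := by
    calc |∑ n ∈ Finset.range m, Δ n| ≤ ∑ n ∈ Finset.range m, |Δ n| :=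
          Finset.abs_sum_le_sum_abs _ _
      _ ≤ ∑ n ∈ Finset.range m, (a * b) ^ n * (y - x) := by
          apply Finset.sum_le_sum
          intro n _
          rw [hΔ]; simp only []
          rw [← mul_sub, abs_mul, abs_pow, abs_of_pos ha]
          calc a ^ n * |Real.cos ((b : ℝ) ^ n * y) - Real.cos ((b : ℝ) ^ n * x)|
              ≤ a ^ n * |(b : ℝ) ^ n * y - (b : ℝ) ^ n * x| :=
                mul_le_mul_of_nonneg_left (wcos_lip _ _) (by positivity)
            _ = (a * b) ^ n * (y - x) := by
                rw [← mul_sub, abs_mul, abs_of_nonneg (le_of_lt hyx_pos),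
                  abs_pow, abs_of_pos hb0, mul_pow]
                ring
      _ = (∑ n ∈ Finset.range m, (a * b) ^ n) * (y - x) := by
          rw [← Finset.sum_mul]
      _ ≤ ((a * b) ^ m / (a * b - 1)) * (y - x) := by
          gcongr
          rw [geom_sum_eq (ne_of_gt hab1)]
          apply div_le_div_of_nonneg_right ?_ (by linarith)
          nlinarith [pow_pos (lt_trans one_pos hab1) m]
      _ = (y - x) * ((a * b) ^ m / (a * b - 1)) := by ring
  -- combine
  rw [htsum, hsplit]
  have := abs_sub_abs_le_abs_sub (∑' n, Δ (n + m)) (-(∑ n ∈ Finset.range m, Δ n))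
  have habs : |∑' n, Δ (n + m)| - |∑ n ∈ Finset.range m, Δ n| ≤
      |(∑ n ∈ Finset.range m, Δ n) + ∑' n, Δ (n + m)| := by
    have h' := abs_sub_abs_le_abs_sub (∑' n, Δ (n + m)) (-(∑ n ∈ Finset.range m, Δ n))
    rw [abs_neg, sub_neg_eq_add] at h'
    calc |∑' n, Δ (n + m)| - |∑ n ∈ Finset.range m, Δ n| ≤
        |∑' n, Δ (n + m) + ∑ n ∈ Finset.range m, Δ n| := h'
      _ = |(∑ n ∈ Finset.range m, Δ n) + ∑' n, Δ (n + m)| := by rw [add_comm]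
  linarith

theorem weierstrass_nowhere_differentiable (a : ℝ) (b : ℕ) (ha : 0 < a) (ha1 : a < 1)
    (hb : 0 < b) (hodd : Odd b) (hab : a * b > 1 + 3 * Real.pi / 2) :
    ∀ x : ℝ, ¬ DifferentiableAt ℝ (fun x : ℝ => ∑' n : ℕ, a ^ n * Real.cos ((b : ℝ) ^ n * x)) x := by
  intro x hdiff
  have hπ := Real.pi_pos
  set f : ℝ → ℝ := fun x : ℝ => ∑' n : ℕ, a ^ n * Real.cos ((b : ℝ) ^ n * x) with hf
  have hab1 : 1 < a * b := by nlinarith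
  have hb0 : (0 : ℝ) < b := by exact_mod_cast hb
  have hb1 : (1 : ℝ) < b := by nlinarith
  -- the constant
  set C : ℝ := 2 / (3 * π) - 1 / (a * b - 1) with hC
  have hC0 : 0 < C := by
    rw [hC]
    have h1 : 3 * π / 2 < a * b - 1 := by linarith
    have h2 : 0 < 3 * π := by linarith
    have h3 : 0 < a * b - 1 := by linarith
    rw [sub_pos, div_lt_div_iff₀ h3 h2]
    nlinarith
  -- choose points
  have key := fun m => weier_key a b ha ha1 hodd hab1 x m
  choose y hy1 hy2 hy3 using key
  -- slope lower bound
  have hslope : ∀ m : ℕ, (a * b) ^ m * C ≤ |slope f x (y m)| := by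
    intro m
    have hbm : (0 : ℝ) < (b : ℝ) ^ m := by positivity
    have hd := hy1 m
    have hd2 := hy2 m
    have hd3 := hy3 m
    rw [slope_def_field, abs_div, abs_of_pos hd]
    rw [le_div_iff₀ hd]
    have ham : (0 : ℝ) < a ^ m := pow_pos ha m
    have habm : (0 : ℝ) < (a * b) ^ m := pow_pos (by linarith) m
    have hab1' : (0 : ℝ) < a * b - 1 := by linarith
    -- (ab)^m * C * d ≤ a^m - d*(ab)^m/(ab-1) suffices
    have hkey : (a * b) ^ m * C * (y m - x) ≤ a ^ m - (y m - x) * ((a * b) ^ m / (a * b - 1)) := by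
      have hCdef : (a * b) ^ m * C * (y m - x) + (y m - x) * ((a * b) ^ m / (a * b - 1))
          = (y m - x) * ((a * b) ^ m * (2 / (3 * π))) := by
        rw [hC]; field_simp; ring
      have h2 : (y m - x) * ((a * b) ^ m * (2 / (3 * π))) ≤ a ^ m := by
        have h3 : (y m - x) * ((a * b) ^ m * (2 / (3 * π))) ≤
            (3 * π / 2 / (b : ℝ) ^ m) * ((a * b) ^ m * (2 / (3 * π))) :=
          mul_le_mul_of_nonneg_right hd2 (by positivity)
        have h4 : (3 * π / 2 / (b : ℝ) ^ m) * ((a * b) ^ m * (2 / (3 * π))) = a ^ m := by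
          rw [mul_pow]
          field_simp
        linarith
      linarith
    calc (a * b) ^ m * C * (y m - x) ≤ a ^ m - (y m - x) * ((a * b) ^ m / (a * b - 1)) := hkey
      _ ≤ |f (y m) - f x| := hd3
  -- y m → x within {x}ᶜ
  have hyx_ne : ∀ m, y m ≠ x := fun m => by have := hy1 m; intro h; rw [h] at this; linarith
  have hytend : Tendsto y atTop (𝓝 x) := by
    rw [tendsto_iff_dist_tendsto_zero]
    apply squeeze_zero (fun m => dist_nonneg)
      (fun m => ?_) (g := fun m => 3 * π / 2 * ((b : ℝ)⁻¹) ^ m)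
    · have : Tendsto (fun m : ℕ => ((b : ℝ)⁻¹) ^ m) atTop (𝓝 0) :=
        tendsto_pow_atTop_nhds_zero_of_lt_one (by positivity) (by
          rw [inv_lt_one_iff₀]; right; exact hb1)
      simpa using this.const_mul (3 * π / 2)
    · rw [Real.dist_eq, abs_of_pos (by linarith [hy1 m] : (0:ℝ) < y m - x)]
      have := hy2 m
      rw [div_eq_mul_inv, ← inv_pow] at this
      exact this
  have hytend' : Tendsto y atTop (𝓝[≠] x) :=
    tendsto_nhdsWithin_of_tendsto_nhds_of_eventually_within _ hytend
      (Eventually.of_forall (fun m => hyx_ne m))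
  -- derivative
  have hL : HasDerivAt f (deriv f x) x := hdiff.hasDerivAt
  have hslope_tend : Tendsto (fun m => slope f x (y m)) atTop (𝓝 (deriv f x)) :=
    (hasDerivAt_iff_tendsto_slope.mp hL).comp hytend'
  have hbdd : ∀ᶠ m in atTop, |slope f x (y m)| < |deriv f x| + 1 :=
    (hslope_tend.abs).eventually_lt_const (lt_add_one _)
  have hgrow : Tendsto (fun m : ℕ => (a * b) ^ m * C) atTop atTop :=
    (tendsto_pow_atTop_atTop_of_one_lt hab1).atTop_mul_const hC0
  have hbig : ∀ᶠ m in atTop, |deriv f x| + 1 ≤ (a * b) ^ m * C :=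
    hgrow.eventually_ge_atTop _
  rcases (hbdd.and hbig).exists with ⟨m, h1, h2⟩
  have := hslope m
  linarith
end

section
/- For each n ∈ ℕ, the set Eₙ = {f ∈ A(D) : Re f restricted to the unit circle, viewed as a 2π-periodic function θ ↦ Re f(e^{iθ}), belongs to Dₙ} is open in the disc algebra A(D) with the supremum norm. -/
open scoped Classical

instance : CompactSpace (Metric.closedBall (0 : ℂ) 1) :=
  isCompact_iff_compactSpace.mp (isCompact_closedBall 0 1)

/-- The disc algebra: continuous functions on the closed unit disc that are
holomorphic on the open unit disc, with the supremum metric (inherited from `C(·,ℂ)`). -/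
def DiscAlgebra : Type :=
  {f : C(Metric.closedBall (0 : ℂ) 1, ℂ) //
    DifferentiableOn ℂ
      (fun z : ℂ => if h : z ∈ Metric.closedBall (0 : ℂ) 1 then f ⟨z, h⟩ else 0)
      (Metric.ball (0 : ℂ) 1)}

noncomputable instance : MetricSpace DiscAlgebra :=
  inferInstanceAs (MetricSpace {f : C(Metric.closedBall (0 : ℂ) 1, ℂ) //
    DifferentiableOn ℂ
      (fun z : ℂ => if h : z ∈ Metric.closedBall (0 : ℂ) 1 then f ⟨z, h⟩ else 0)
      (Metric.ball (0 : ℂ) 1)})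

lemma exp_mem_closedBall (θ : ℝ) :
    Complex.exp (θ * Complex.I) ∈ Metric.closedBall (0 : ℂ) 1 := by
  simp [Metric.mem_closedBall, Complex.dist_eq, Complex.norm_exp_ofReal_mul_I]

/-- Key real-analysis lemma: if a continuous `2π`-periodic function satisfies the
`Dₙ` condition, then the margin in the defining inequality is uniformly positive. -/
lemma key_margin (n : ℕ) (hn : 0 < n) (u : ℝ → ℝ) (hu : Continuous u)
    (hper : ∀ x : ℝ, u (x + 2 * Real.pi) = u x)
    (H : ∀ θ : ℝ, ∃ y ∈ Set.Ioo θ (θ + 1 / n), |u y - u θ| > n * |y - θ|) :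
    ∃ δ > 0, ∀ θ : ℝ, ∃ y ∈ Set.Ioo θ (θ + 1 / n),
      |u y - u θ| - n * (y - θ) > δ := by
  have hnpos : (0 : ℝ) < n := by exact_mod_cast hn
  -- Step A: local uniform margin
  have stepA : ∀ θ : ℝ, ∃ d > 0, ∃ c > 0, ∀ θ' : ℝ, |θ' - θ| < d →
      ∃ y ∈ Set.Ioo θ' (θ' + 1 / n), |u y - u θ'| - n * (y - θ') > c := by
    intro θ
    obtain ⟨y, hy, hval⟩ := H θ
    have hyθ : θ < y := hy.1
    have habs : |y - θ| = y - θ := abs_of_pos (by linarith)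
    set c0 : ℝ := |u y - u θ| - n * (y - θ) with hc0
    have hc0pos : 0 < c0 := by rw [habs] at hval; simp only [hc0]; linarith
    obtain ⟨d2, hd2pos, hd2⟩ := Metric.continuous_iff.mp hu θ (c0 / 4) (by linarith)
    have hc4n : (0 : ℝ) < c0 / (4 * n) := by positivity
    refine ⟨min (min (y - θ) (θ + 1 / n - y)) (min d2 (c0 / (4 * n))),
      lt_min (lt_min (by linarith) (by linarith [hy.2])) (lt_min hd2pos hc4n),
      c0 / 2, by linarith, ?_⟩
    intro θ' hθ'
    have h1 : |θ' - θ| < y - θ :=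
      lt_of_lt_of_le hθ' ((min_le_left _ _).trans (min_le_left _ _))
    have h2 : |θ' - θ| < θ + 1 / n - y :=
      lt_of_lt_of_le hθ' ((min_le_left _ _).trans (min_le_right _ _))
    have h3 : |θ' - θ| < d2 :=
      lt_of_lt_of_le hθ' ((min_le_right _ _).trans (min_le_left _ _))
    have h4 : |θ' - θ| < c0 / (4 * n) :=
      lt_of_lt_of_le hθ' ((min_le_right _ _).trans (min_le_right _ _))
    have hle1 : θ' - θ ≤ |θ' - θ| := le_abs_self _
    have hle2 : θ - θ' ≤ |θ' - θ| := by rw [abs_sub_comm]; exact le_abs_self _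
    have hmem : y ∈ Set.Ioo θ' (θ' + 1 / n) := ⟨by linarith, by linarith⟩
    refine ⟨y, hmem, ?_⟩
    have hcont : |u θ' - u θ| < c0 / 4 := by
      have := hd2 θ' (by rwa [Real.dist_eq])
      rwa [Real.dist_eq] at this
    have htri : |u y - u θ| ≤ |u y - u θ'| + |u θ' - u θ| := abs_sub_le _ _ _
    have hmul : n * (θ - θ') ≤ n * |θ' - θ| :=
      mul_le_mul_of_nonneg_left hle2 (le_of_lt hnpos)
    have hmul2 : n * |θ' - θ| < n * (c0 / (4 * n)) :=
      mul_lt_mul_of_pos_left h4 hnpos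
    have heq : n * (c0 / (4 * n)) = c0 / 4 := by field_simp
    have hv : |u y - u θ| - n * (y - θ) = c0 := rfl
    nlinarith [hv]
  choose d hd c hc hloc using stepA
  -- Step B: compactness on [0, 2π]
  obtain ⟨t, ht⟩ := (isCompact_Icc : IsCompact (Set.Icc (0 : ℝ) (2 * Real.pi))).elim_finite_subcover
    (fun θ => Metric.ball θ (d θ)) (fun θ => Metric.isOpen_ball)
    (fun θ _ => Set.mem_iUnion.mpr ⟨θ, Metric.mem_ball_self (hd θ)⟩)
  have h0mem : (0 : ℝ) ∈ Set.Icc (0 : ℝ) (2 * Real.pi) :=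
    ⟨le_refl _, by positivity⟩
  obtain ⟨i0, hi0t, _⟩ := Set.mem_iUnion₂.mp (ht h0mem)
  have htne : t.Nonempty := ⟨i0, hi0t⟩
  set δ : ℝ := t.inf' htne c with hδdef
  have hδpos : 0 < δ := by
    rw [hδdef, Finset.lt_inf'_iff]
    exact fun i _ => hc i
  have main : ∀ θ ∈ Set.Icc (0 : ℝ) (2 * Real.pi),
      ∃ y ∈ Set.Ioo θ (θ + 1 / n), |u y - u θ| - n * (y - θ) > δ := by
    intro θ hθ
    obtain ⟨i, hit, hθi⟩ := Set.mem_iUnion₂.mp (ht hθ)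
    have hdist : |θ - i| < d i := by rwa [Metric.mem_ball, Real.dist_eq] at hθi
    obtain ⟨y, hy, hv⟩ := hloc i θ hdist
    exact ⟨y, hy, lt_of_le_of_lt (Finset.inf'_le c hit) hv⟩
  -- Step C: extend by periodicity
  refine ⟨δ, hδpos, fun θ => ?_⟩
  have h2π : (0 : ℝ) < 2 * Real.pi := by positivity
  set k : ℤ := ⌊θ / (2 * Real.pi)⌋ with hk
  have hper' : Function.Periodic u (2 * Real.pi) := hper
  have uper : ∀ x : ℝ, u (x + k * (2 * Real.pi)) = u x := fun x =>
    (hper'.int_mul k) x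
  set θ0 : ℝ := θ - k * (2 * Real.pi) with hθ0def
  have hθ0 : θ0 ∈ Set.Icc (0 : ℝ) (2 * Real.pi) := by
    constructor
    · exact Int.sub_floor_div_mul_nonneg θ h2π
    · exact le_of_lt (Int.sub_floor_div_mul_lt θ h2π)
  obtain ⟨y0, hy0, hv0⟩ := main θ0 hθ0
  refine ⟨y0 + k * (2 * Real.pi), ⟨by have := hy0.1; simp only [hθ0def] at this; linarith,
    by have := hy0.2; simp only [hθ0def] at this; linarith⟩, ?_⟩
  have e1 : u (y0 + k * (2 * Real.pi)) = u y0 := uper y0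
  have e2 : u θ = u θ0 := by
    have := uper θ0
    simp only [hθ0def] at this ⊢
    rw [← this]; ring_nf
  rw [e1, e2]
  have : y0 + k * (2 * Real.pi) - θ = y0 - θ0 := by simp only [hθ0def]; ring
  rw [this]
  exact hv0

theorem En_isOpen (n : ℕ) (hn : 0 < n) :
    IsOpen {f : DiscAlgebra | ∀ θ : ℝ, ∃ y ∈ Set.Ioo θ (θ + 1 / n),
      |(f.1 ⟨Complex.exp (y * Complex.I), exp_mem_closedBall y⟩).re -
        (f.1 ⟨Complex.exp (θ * Complex.I), exp_mem_closedBall θ⟩).re| > n * |y - θ|} := by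
  rw [Metric.isOpen_iff]
  intro f hf
  set u : ℝ → ℝ :=
    fun θ => (f.1 ⟨Complex.exp (θ * Complex.I), exp_mem_closedBall θ⟩).re with hu_def
  have hcexp : Continuous fun θ : ℝ =>
      (⟨Complex.exp (θ * Complex.I), exp_mem_closedBall θ⟩ :
        Metric.closedBall (0 : ℂ) 1) := by
    apply Continuous.subtype_mk
    exact Complex.continuous_exp.comp (by continuity)
  have hu : Continuous u := Complex.continuous_re.comp (f.1.continuous.comp hcexp)
  have hexp_per : ∀ x : ℝ, Complex.exp (↑(x + 2 * Real.pi) * Complex.I)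
      = Complex.exp (↑x * Complex.I) := by
    intro x
    push_cast
    rw [add_mul, Complex.exp_add, Complex.exp_two_pi_mul_I, mul_one]
  have hper : ∀ x : ℝ, u (x + 2 * Real.pi) = u x := by
    intro x
    simp only [hu_def]
    congr 2
    exact Subtype.ext (hexp_per x)
  obtain ⟨δ, hδpos, hδ⟩ := key_margin n hn u hu hper hf
  refine ⟨δ / 2, by linarith, fun g hg => ?_⟩
  rw [Metric.mem_ball] at hg
  intro θ
  obtain ⟨y, hy, hv⟩ := hδ θ
  refine ⟨y, hy, ?_⟩
  set v : ℝ → ℝ :=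
    fun s => (g.1 ⟨Complex.exp (s * Complex.I), exp_mem_closedBall s⟩).re with hv_def
  have hb : ∀ s : ℝ, |v s - u s| ≤ dist g f := by
    intro s
    have h1 : dist (g.1 ⟨Complex.exp (s * Complex.I), exp_mem_closedBall s⟩)
        (f.1 ⟨Complex.exp (s * Complex.I), exp_mem_closedBall s⟩) ≤ dist g.1 f.1 :=
      ContinuousMap.dist_apply_le_dist _
    have h2 : |v s - u s| ≤ dist (g.1 ⟨Complex.exp (s * Complex.I), exp_mem_closedBall s⟩)
        (f.1 ⟨Complex.exp (s * Complex.I), exp_mem_closedBall s⟩) := by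
      rw [Complex.dist_eq]
      calc |v s - u s| = |(g.1 ⟨Complex.exp (s * Complex.I), exp_mem_closedBall s⟩ -
            f.1 ⟨Complex.exp (s * Complex.I), exp_mem_closedBall s⟩).re| := by
              simp [hv_def, hu_def, Complex.sub_re]
        _ ≤ _ := Complex.abs_re_le_norm _
    calc |v s - u s| ≤ _ := h2
      _ ≤ dist g.1 f.1 := h1
      _ = dist g f := (Subtype.dist_eq g f).symm
  have hby := hb y
  have hbθ := hb θ
  have habs : |y - θ| = y - θ := abs_of_pos (by linarith [hy.1])
  have htri : |u y - u θ| ≤ |u y - v y| + |v y - v θ| + |v θ - u θ| := by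
    calc |u y - u θ| ≤ |u y - v θ| + |v θ - u θ| := abs_sub_le _ _ _
      _ ≤ (|u y - v y| + |v y - v θ|) + |v θ - u θ| := by
          gcongr; exact abs_sub_le _ _ _
  have h5 : |u y - v y| = |v y - u y| := abs_sub_comm _ _
  have h6 : |v θ - u θ| ≤ dist g f := hbθ
  show |v y - v θ| > n * |y - θ|
  rw [habs]
  linarith [hby, h5 ▸ hby]
end

section
/- If u : ℝ → ℝ belongs to Dₙ for every n ∈ ℕ, then u is not differentiable at any point of ℝ. -/
/-- The set `Dₙ` of continuous `2π`-periodic functions with large difference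
quotients at scale `1/n` near every point. -/
def Dset (n : ℕ) : Set (ℝ → ℝ) :=
  {u | Continuous u ∧ Function.Periodic u (2 * Real.pi) ∧
    ∀ θ : ℝ, ∃ y ∈ Set.Ioo θ (θ + 1 / n), |u y - u θ| > n * |y - θ|}

theorem mem_all_Dn_nowhere_differentiable (u : ℝ → ℝ)
    (hu : ∀ n : ℕ, 0 < n → u ∈ Dset n) :
    ∀ x : ℝ, ¬ DifferentiableAt ℝ u x := by
  intro x hdiff
  set L := deriv u x with hLdef
  have hL : HasDerivAt u L x := hdiff.hasDerivAt
  rw [hasDerivAt_iff_isLittleO] at hL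
  have h := hL.def one_pos
  rw [Metric.eventually_nhds_iff] at h
  obtain ⟨δ, hδ, hball⟩ := h
  obtain ⟨n, hn⟩ := exists_nat_gt (max (|L| + 1) (1 / δ))
  have hn1 : (|L| + 1 : ℝ) < n := lt_of_le_of_lt (le_max_left _ _) hn
  have hn2 : (1 / δ : ℝ) < n := lt_of_le_of_lt (le_max_right _ _) hn
  have hn0R : (0 : ℝ) < n := lt_of_le_of_lt (by positivity) hn1
  have hn0 : 0 < n := by exact_mod_cast hn0R
  obtain ⟨_, _, hD⟩ := hu n hn0
  obtain ⟨y, ⟨hy1, hy2⟩, hgt⟩ := hD x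
  have hyx : 0 < y - x := sub_pos.mpr hy1
  have hlt : y - x < 1 / n := by linarith
  have h1nδ : (1 : ℝ) / n < δ := by
    rw [div_lt_iff₀ hn0R]
    rw [div_lt_iff₀ hδ] at hn2
    linarith
  have hdist : dist y x < δ := by
    rw [Real.dist_eq, abs_of_pos hyx]; linarith
  have hb := hball hdist
  simp only [Real.norm_eq_abs, one_mul, smul_eq_mul] at hb
  have habs : |y - x| = y - x := abs_of_pos hyx
  have key : |u y - u x| ≤ (|L| + 1) * |y - x| := by
    calc |u y - u x| = |(u y - u x - (y - x) * L) + (y - x) * L| := by ring_nf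
      _ ≤ |u y - u x - (y - x) * L| + |(y - x) * L| := abs_add_le _ _
      _ ≤ |y - x| + |y - x| * |L| := by
          rw [abs_mul]; exact add_le_add hb le_rfl
      _ = (|L| + 1) * |y - x| := by ring
  have : (n : ℝ) * |y - x| < (|L| + 1) * |y - x| := lt_of_lt_of_le hgt key
  have habs0 : 0 < |y - x| := by rw [habs]; exact hyx
  nlinarith
end

section
/- If u belongs to Dₙ for some n, and p : ℝ → ℝ is continuously differentiable with |p′| bounded by M, then u + p belongs to Dₘ for every m with m ≤ n − M. In particular, if u ∈ Dₙ for all n, then u + p ∈ Dₘ for all m ∈ ℕ. -/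
theorem Dn_add_smooth (u p : ℝ → ℝ) (M : ℝ) (hM : 0 < M)
    (hp : ContDiff ℝ 1 p) (hpper : Function.Periodic p (2 * Real.pi))
    (hp' : ∀ x : ℝ, |deriv p x| ≤ M) :
    (∀ n : ℕ, 0 < n → u ∈ Dset n →
      ∀ m : ℕ, 0 < m → (m : ℝ) ≤ (n : ℝ) - M → u + p ∈ Dset m) ∧
    ((∀ n : ℕ, 0 < n → u ∈ Dset n) → ∀ m : ℕ, 0 < m → u + p ∈ Dset m) := by
  have hlip : ∀ x y : ℝ, |p y - p x| ≤ M * |y - x| := by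
    intro x y
    have h := Convex.norm_image_sub_le_of_norm_deriv_le
      (f := p) (s := Set.univ) (C := M)
      (fun z _ => hp.differentiable one_ne_zero z)
      (fun z _ => hp' z) convex_univ (Set.mem_univ x) (Set.mem_univ y)
    simpa [Real.norm_eq_abs] using h
  have main : ∀ n : ℕ, 0 < n → u ∈ Dset n →
      ∀ m : ℕ, 0 < m → (m : ℝ) ≤ (n : ℝ) - M → u + p ∈ Dset m := by
    intro n hn hu m hm hmn
    obtain ⟨hc, hper, hD⟩ := hu
    refine ⟨hc.add hp.continuous, hper.add hpper, fun θ => ?_⟩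
    obtain ⟨y, hy, hgt⟩ := hD θ
    have hmn' : (m : ℝ) < (n : ℝ) := lt_of_le_of_lt hmn (by linarith)
    have hnpos : (0:ℝ) < n := by exact_mod_cast hn
    have hmpos : (0:ℝ) < m := by exact_mod_cast hm
    refine ⟨y, ⟨hy.1, lt_of_lt_of_le hy.2 ?_⟩, ?_⟩
    · have : (1:ℝ)/n ≤ 1/m := by
        apply one_div_le_one_div_of_le hmpos (le_of_lt hmn')
      linarith
    · have habs : (0:ℝ) < |y - θ| := abs_pos.mpr (sub_ne_zero.mpr (ne_of_gt hy.1))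
      have h1 : |u y - u θ| - |p y - p θ| ≤ |(u + p) y - (u + p) θ| := by
        have := abs_sub_abs_le_abs_sub (u y - u θ) (-(p y - p θ))
        simp only [abs_neg, sub_neg_eq_add] at this
        calc |u y - u θ| - |p y - p θ| ≤ |(u y - u θ) + (p y - p θ)| := this
          _ = |(u + p) y - (u + p) θ| := by
              congr 1; simp only [Pi.add_apply]; ring
      have h2 : M * |y - θ| ≥ |p y - p θ| := hlip θ y
      have h3 : (m : ℝ) * |y - θ| ≤ ((n : ℝ) - M) * |y - θ| := by nlinarith
      nlinarith
  refine ⟨main, fun hall m hm => ?_⟩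
  have hMn : M ≤ (⌈M⌉₊ : ℝ) := Nat.le_ceil M
  exact main (m + ⌈M⌉₊) (by positivity) (hall _ (by positivity)) m hm
    (by push_cast; linarith)
end

section
/- The set S = ⋂ₙ Eₙ is dense in the disc algebra A(D): every f ∈ A(D) is the uniform limit of functions g ∈ A(D) whose real parts on the unit circle belong to every Dₙ. -/
open scoped Classical

/-- The boundary values of `f ∈ A(D)`, as a `2π`-periodic function of `θ`. -/
noncomputable def bdry (f : DiscAlgebra) (θ : ℝ) : ℂ :=
  f.1 ⟨Complex.exp (θ * Complex.I), exp_mem_closedBall θ⟩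

/-- The set `S = ⋂ₙ Eₙ` of disc algebra functions whose boundary real part
belongs to every `Dₙ`. -/
def Sset : Set DiscAlgebra :=
  {f | ∀ n : ℕ, 0 < n → ∀ θ : ℝ, ∃ y ∈ Set.Ioo θ (θ + 1 / n),
    |(bdry f y).re - (bdry f θ).re| > n * |y - θ|}


open Real


/-- Our Weierstrass-type function. -/
noncomputable def uW (θ : ℝ) : ℝ := ∑' k : ℕ, (1/4 : ℝ)^k * Real.cos (64^k * θ)

lemma summable_quarter : Summable (fun k : ℕ => (1/4 : ℝ)^k) :=
  summable_geometric_of_lt_one (by norm_num) (by norm_num)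

lemma uW_summable (θ : ℝ) : Summable (fun k : ℕ => (1/4 : ℝ)^k * Real.cos (64^k * θ)) := by
  apply Summable.of_norm_bounded summable_quarter
  intro k
  rw [Real.norm_eq_abs, abs_mul, abs_pow]
  calc |(1/4:ℝ)|^k * |Real.cos (64^k*θ)| ≤ |(1/4:ℝ)|^k * 1 := by
        gcongr; exact Real.abs_cos_le_one _
    _ = (1/4:ℝ)^k := by rw [abs_of_nonneg (by norm_num : (0:ℝ) ≤ 1/4)]; ring

lemma cos_lip (x y : ℝ) : |Real.cos x - Real.cos y| ≤ |x - y| := by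
  rw [Real.cos_sub_cos]
  have h1 : |Real.sin ((x+y)/2)| ≤ 1 := Real.abs_sin_le_one _
  have h2 : |Real.sin ((x-y)/2)| ≤ |(x-y)/2| := Real.abs_sin_le_abs
  calc |(-2) * Real.sin ((x+y)/2) * Real.sin ((x-y)/2)|
      = 2 * (|Real.sin ((x+y)/2)| * |Real.sin ((x-y)/2)|) := by
        rw [abs_mul, abs_mul]; norm_num; ring
    _ ≤ 2 * (1 * |(x-y)/2|) := by gcongr
    _ = |x - y| := by rw [abs_div]; rw [abs_of_nonneg (by norm_num : (0:ℝ) ≤ 2)]; ring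

lemma key_osc (θ : ℝ) (m : ℕ) :
    ∃ y : ℝ, θ < y ∧ y ≤ θ + 2*π/64^m ∧ (3/4)*(1/4:ℝ)^m ≤ |uW y - uW θ| := by
  have hP : (0:ℝ) < 64^m := by positivity
  have h2π : (0:ℝ) < 2*π := by positivity
  set j0 : ℤ := ⌊(64:ℝ)^m*θ/(2*π)⌋ + 1 with hj0
  set j1 : ℤ := ⌊((64:ℝ)^m*θ - π)/(2*π)⌋ + 1 with hj1
  set y0 : ℝ := 2*π*j0/64^m with hy0
  set y1 : ℝ := (2*π*j1 + π)/64^m with hy1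
  -- location of y0
  have hfl0a : (64:ℝ)^m*θ/(2*π) < (j0:ℝ) := by
    push_cast [hj0]; exact Int.lt_floor_add_one _
  have hfl0b : ((j0:ℝ)) ≤ (64:ℝ)^m*θ/(2*π) + 1 := by
    push_cast [hj0]; linarith [Int.floor_le ((64:ℝ)^m*θ/(2*π))]
  have hy0a : θ < y0 := by
    rw [hy0, lt_div_iff₀ hP]
    have := (div_lt_iff₀ h2π).mp hfl0a
    linarith
  have hy0b : y0 ≤ θ + 2*π/64^m := by
    rw [hy0, div_le_iff₀ hP]
    have : ((j0:ℝ)) * (2*π) ≤ ((64:ℝ)^m*θ/(2*π) + 1) * (2*π) := by gcongr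
    rw [add_mul, one_mul, div_mul_cancel₀ _ (ne_of_gt h2π)] at this
    have h64 : (θ + 2*π/64^m) * 64^m = 64^m*θ + 2*π := by field_simp
    rw [h64]; linarith
  -- location of y1
  have hfl1a : ((64:ℝ)^m*θ - π)/(2*π) < (j1:ℝ) := by
    push_cast [hj1]; exact Int.lt_floor_add_one _
  have hfl1b : ((j1:ℝ)) ≤ ((64:ℝ)^m*θ - π)/(2*π) + 1 := by
    push_cast [hj1]; linarith [Int.floor_le (((64:ℝ)^m*θ - π)/(2*π))]
  have hy1a : θ < y1 := by
    rw [hy1, lt_div_iff₀ hP]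
    have := (div_lt_iff₀ h2π).mp hfl1a
    linarith
  have hy1b : y1 ≤ θ + 2*π/64^m := by
    rw [hy1, div_le_iff₀ hP]
    have : ((j1:ℝ)) * (2*π) ≤ (((64:ℝ)^m*θ - π)/(2*π) + 1) * (2*π) := by gcongr
    rw [add_mul, one_mul, div_mul_cancel₀ _ (ne_of_gt h2π)] at this
    have h64 : (θ + 2*π/64^m) * 64^m = 64^m*θ + 2*π := by field_simp
    rw [h64]; linarith
  -- cosine values at y0
  have hcos0 : ∀ k, m ≤ k → Real.cos (64^k * y0) = 1 := by
    intro k hk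
    have hkk : (64:ℝ)^k = (64:ℝ)^(k-m) * (64:ℝ)^m := by
      rw [← pow_add]; congr 1; omega
    have : (64:ℝ)^k * y0 = ((64^(k-m) * j0 : ℤ) : ℝ) * (2*π) := by
      rw [hy0, hkk]; push_cast; field_simp
    rw [this, Real.cos_int_mul_two_pi]
  -- cosine values at y1
  have hcos1m : Real.cos (64^m * y1) = -1 := by
    have : (64:ℝ)^m * y1 = π + (j1:ℝ) * (2*π) := by
      rw [hy1]; field_simp; ring
    rw [this]
    have := Real.cos_add_int_mul_two_pi π j1
    rw [this, Real.cos_pi]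
  have hcos1 : ∀ k, m < k → Real.cos (64^k * y1) = 1 := by
    intro k hk
    have hkk : (64:ℝ)^k = (64:ℝ)^(k-m-1) * 64 * (64:ℝ)^m := by
      rw [mul_assoc, ← pow_succ', ← pow_add]; congr 1; omega
    have : (64:ℝ)^k * y1 = ((64^(k-m-1) * (64*j1 + 32) : ℤ) : ℝ) * (2*π) := by
      rw [hy1, hkk]; push_cast; field_simp; ring
    rw [this, Real.cos_int_mul_two_pi]
  -- the difference as a finite sum
  have hdiff : uW y0 - uW y1 =
      ∑ k ∈ Finset.range (m+1), (1/4:ℝ)^k * (Real.cos (64^k*y0) - Real.cos (64^k*y1)) := by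
    rw [uW, uW, ← Summable.tsum_sub (uW_summable y0) (uW_summable y1)]
    rw [show (fun k : ℕ => (1/4:ℝ)^k * Real.cos (64^k*y0) - (1/4:ℝ)^k * Real.cos (64^k*y1))
        = fun k : ℕ => (1/4:ℝ)^k * (Real.cos (64^k*y0) - Real.cos (64^k*y1)) from
        funext fun k => by ring]
    exact tsum_eq_sum (fun k hk => by
      have hk' : m < k := by simpa [Finset.mem_range] using hk
      rw [hcos0 k hk'.le, hcos1 k hk']; ring)
  -- head estimate
  have hy01 : |y0 - y1| ≤ 2*π/64^m := by
    rw [abs_sub_le_iff]; constructor <;> linarith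
  have hhead : |∑ k ∈ Finset.range m, (1/4:ℝ)^k * (Real.cos (64^k*y0) - Real.cos (64^k*y1))|
      ≤ (1/2)*(1/4:ℝ)^m := by
    calc |∑ k ∈ Finset.range m, (1/4:ℝ)^k * (Real.cos (64^k*y0) - Real.cos (64^k*y1))|
        ≤ ∑ k ∈ Finset.range m, |(1/4:ℝ)^k * (Real.cos (64^k*y0) - Real.cos (64^k*y1))| :=
          Finset.abs_sum_le_sum_abs _ _
      _ ≤ ∑ k ∈ Finset.range m, (2*π/64^m) * (16:ℝ)^k := by
          apply Finset.sum_le_sum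
          intro k _
          rw [abs_mul, abs_pow]
          have h1 : |Real.cos (64^k*y0) - Real.cos (64^k*y1)| ≤ (64:ℝ)^k * (2*π/64^m) := by
            calc |Real.cos (64^k*y0) - Real.cos (64^k*y1)| ≤ |(64:ℝ)^k*y0 - 64^k*y1| :=
                  cos_lip _ _
              _ = (64:ℝ)^k * |y0 - y1| := by
                  rw [← mul_sub, abs_mul, abs_of_nonneg (by positivity : (0:ℝ) ≤ (64:ℝ)^k)]
              _ ≤ (64:ℝ)^k * (2*π/64^m) := by gcongr
          calc |(1/4:ℝ)|^k * |Real.cos (64^k*y0) - Real.cos (64^k*y1)|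
              ≤ |(1/4:ℝ)|^k * ((64:ℝ)^k * (2*π/64^m)) := by gcongr
            _ = (2*π/64^m) * (16:ℝ)^k := by
                rw [abs_of_nonneg (by norm_num : (0:ℝ) ≤ 1/4)]
                rw [show (16:ℝ)^k = (1/4:ℝ)^k * (64:ℝ)^k by
                  rw [← mul_pow]; norm_num]
                ring
      _ = (2*π/64^m) * ∑ k ∈ Finset.range m, (16:ℝ)^k := by rw [Finset.mul_sum]
      _ ≤ (2*π/64^m) * ((16:ℝ)^m / 15) := by
          gcongr
          rw [geom_sum_eq (by norm_num : (16:ℝ) ≠ 1)]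
          norm_num
          linarith [pow_pos (show (0:ℝ) < 16 by norm_num) m]
      _ ≤ (1/2)*(1/4:ℝ)^m := by
          have hq : (16:ℝ)^m / (64:ℝ)^m = (1/4:ℝ)^m := by
            rw [← div_pow]; norm_num
          have hpi : π < 3.15 := Real.pi_lt_d2
          have h4 : (0:ℝ) < (1/4:ℝ)^m := by positivity
          calc (2*π/64^m) * ((16:ℝ)^m / 15) = (2*π/15) * ((16:ℝ)^m/(64:ℝ)^m) := by ring
            _ = (2*π/15) * (1/4:ℝ)^m := by rw [hq]
            _ ≤ (1/2)*(1/4:ℝ)^m := by nlinarith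
  -- the m-th term
  have hsum : |uW y0 - uW y1| ≥ (3/2)*(1/4:ℝ)^m := by
    rw [hdiff, Finset.sum_range_succ, hcos0 m le_rfl, hcos1m]
    have hlast : (1/4:ℝ)^m * (1 - (-1)) = 2*(1/4:ℝ)^m := by ring
    rw [hlast]
    set S := ∑ k ∈ Finset.range m, (1/4:ℝ)^k * (Real.cos (64^k*y0) - Real.cos (64^k*y1))
    have := abs_add_le S (2*(1/4:ℝ)^m)
    have h1 : |S| ≤ (1/2)*(1/4:ℝ)^m := hhead
    have h2 : (0:ℝ) < (1/4:ℝ)^m := by positivity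
    rw [ge_iff_le, le_abs]
    rcases abs_le.mp h1 with ⟨ha, hb⟩
    left; linarith
  -- conclude
  rcases le_or_gt ((3/4)*(1/4:ℝ)^m) |uW y0 - uW θ| with h | h
  · exact ⟨y0, hy0a, hy0b, h⟩
  · refine ⟨y1, hy1a, hy1b, ?_⟩
    have t1 : |uW y0 - uW y1| ≤ |uW y0 - uW θ| + |uW θ - uW y1| := abs_sub_le _ _ _
    have t2 : |uW θ - uW y1| = |uW y1 - uW θ| := abs_sub_comm _ _
    linarith

lemma comb {L c : ℝ} (hL : 0 ≤ L) (hc : 0 < c) (v : ℝ → ℝ)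
    (hv : ∀ x y : ℝ, |v x - v y| ≤ L * |x - y|) (n : ℕ) (hn : 0 < n) (θ : ℝ) :
    ∃ y ∈ Set.Ioo θ (θ + 1 / n),
      (n:ℝ) * |y - θ| < |(v y + c * uW y) - (v θ + c * uW θ)| := by
  obtain ⟨m, hm⟩ := pow_unbounded_of_one_lt
    (max (9*((n:ℝ) + L)/c) (2*π*n)) (show (1:ℝ) < 16 by norm_num)
  have hm1 : 9*((n:ℝ) + L)/c < (16:ℝ)^m := lt_of_le_of_lt (le_max_left _ _) hm
  have hm2 : 2*π*n < (16:ℝ)^m := lt_of_le_of_lt (le_max_right _ _) hm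
  have h1664 : (16:ℝ)^m ≤ (64:ℝ)^m := by gcongr <;> norm_num
  have hP : (0:ℝ) < 64^m := by positivity
  have hn' : (0:ℝ) < n := by exact_mod_cast hn
  have hπ : (0:ℝ) < π := Real.pi_pos
  obtain ⟨y, hya, hyb, hyc⟩ := key_osc θ m
  have hylt : y < θ + 1/n := by
    have h2 : 2*π/64^m < 1/n := by
      rw [div_lt_div_iff₀ hP hn']
      calc 2*π*n < (16:ℝ)^m := hm2
        _ ≤ (64:ℝ)^m := h1664
        _ = 1 * 64^m := (one_mul _).symm
    linarith
  refine ⟨y, ⟨hya, hylt⟩, ?_⟩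
  have hd : 0 < y - θ := by linarith
  have habs : |y - θ| = y - θ := abs_of_pos hd
  -- lower bound on the perturbed increment
  have hvb : |v y - v θ| ≤ L * (y - θ) := by
    have := hv y θ; rwa [habs] at this
  have htri : c * |uW y - uW θ| - |v y - v θ| ≤ |(v y + c * uW y) - (v θ + c * uW θ)| := by
    have h1 : |c * (uW y - uW θ)| ≤
        |(v y + c * uW y) - (v θ + c * uW θ)| + |v y - v θ| := by
      calc |c * (uW y - uW θ)| = |((v y + c * uW y) - (v θ + c * uW θ)) - (v y - v θ)| := by
            ring_nf
        _ ≤ |(v y + c * uW y) - (v θ + c * uW θ)| + |v y - v θ| := abs_sub _ _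
    rw [abs_mul, abs_of_pos hc] at h1
    linarith
  -- main quantitative estimate
  have hq : (16:ℝ)^m = (1/4:ℝ)^m * (64:ℝ)^m := by
    rw [← mul_pow]; norm_num
  have hA : (0:ℝ) < (1/4:ℝ)^m := by positivity
  have hkey : ((n:ℝ) + L) * (y - θ) < c * ((3/4)*(1/4:ℝ)^m) := by
    have h1 : ((n:ℝ) + L) * (y - θ) ≤ ((n:ℝ) + L) * (2*π/64^m) := by
      have : (0:ℝ) ≤ (n:ℝ) + L := by linarith
      gcongr
      linarith
    have h2 : 9*((n:ℝ) + L) < c * (16:ℝ)^m := by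
      rw [div_lt_iff₀ hc] at hm1; linarith
    have h3 : ((n:ℝ) + L) * (2*π/64^m) < c * ((3/4)*(1/4:ℝ)^m) := by
      rw [div_lt_iff₀ hc] at hm1
      have hpi : π < 3.15 := Real.pi_lt_d2
      have h64 : (0:ℝ) < (64:ℝ)^m := hP
      rw [show ((n:ℝ) + L) * (2*π/64^m) = (((n:ℝ)+L) * (2*π)) / 64^m by ring]
      rw [div_lt_iff₀ h64]
      have : c * ((3/4)*(1/4:ℝ)^m) * 64^m = (3/4) * (c * (16:ℝ)^m) := by
        rw [hq]; ring
      rw [this]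
      have hnL : (0:ℝ) < (n:ℝ) + L := by linarith
      nlinarith
    linarith
  calc (n:ℝ) * |y - θ| = (n:ℝ) * (y - θ) := by rw [habs]
    _ < c * ((3/4)*(1/4:ℝ)^m) - L * (y - θ) := by nlinarith
    _ ≤ c * |uW y - uW θ| - |v y - v θ| := by
        have := mul_le_mul_of_nonneg_left hyc (le_of_lt hc)
        linarith
    _ ≤ |(v y + c * uW y) - (v θ + c * uW θ)| := htri


/-- The interior function of our Weierstrass-type element of the disc algebra. -/
noncomputable def F0fun (z : ℂ) : ℂ := ∑' k : ℕ, (1/4 : ℂ)^k * z^(64^k)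

lemma F0_term_norm {z : ℂ} (hz : ‖z‖ ≤ 1) (k : ℕ) :
    ‖(1/4 : ℂ)^k * z^(64^k)‖ ≤ (1/4 : ℝ)^k := by
  rw [norm_mul, norm_pow, norm_pow]
  have h14 : ‖(1/4 : ℂ)‖ = (1/4 : ℝ) := by
    rw [show (1/4 : ℂ) = ((1/4 : ℝ) : ℂ) by norm_num, Complex.norm_real,
      Real.norm_eq_abs, abs_of_nonneg (by norm_num : (0:ℝ) ≤ 1/4)]
  rw [h14]
  calc (1/4:ℝ)^k * ‖z‖^(64^k) ≤ (1/4:ℝ)^k * 1^(64^k) := by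
        gcongr
    _ = (1/4:ℝ)^k := by norm_num

lemma F0_summable {z : ℂ} (hz : ‖z‖ ≤ 1) :
    Summable (fun k : ℕ => (1/4 : ℂ)^k * z^(64^k)) :=
  Summable.of_norm_bounded summable_quarter (F0_term_norm hz)

lemma F0_continuous :
    Continuous (fun z : Metric.closedBall (0:ℂ) 1 => F0fun z.1) := by
  apply continuous_tsum (u := fun k : ℕ => (1/4 : ℝ)^k)
  · intro k
    exact continuous_const.mul ((continuous_pow _).comp continuous_subtype_val)
  · exact summable_quarter
  · intro k z
    exact F0_term_norm (mem_closedBall_zero_iff.mp z.2) k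

lemma F0_norm_le {z : ℂ} (hz : ‖z‖ ≤ 1) : ‖F0fun z‖ ≤ 2 := by
  have h1 : ‖F0fun z‖ ≤ ∑' k : ℕ, ‖(1/4 : ℂ)^k * z^(64^k)‖ :=
    norm_tsum_le_tsum_norm ((F0_summable hz).norm)
  have h2 : ∑' k : ℕ, ‖(1/4 : ℂ)^k * z^(64^k)‖ ≤ ∑' k : ℕ, (1/4 : ℝ)^k :=
    Summable.tsum_le_tsum (F0_term_norm hz) ((F0_summable hz).norm) summable_quarter
  have h3 : ∑' k : ℕ, (1/4 : ℝ)^k = (1 - 1/4)⁻¹ :=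
    tsum_geometric_of_lt_one (by norm_num) (by norm_num)
  rw [h3] at h2
  have : ((1:ℝ) - 1/4)⁻¹ ≤ 2 := by norm_num
  linarith

lemma F0_diffOn : DifferentiableOn ℂ F0fun (Metric.ball (0:ℂ) 1) := by
  have hb : ∀ (k : ℕ) (z : ℂ), z ∈ Metric.closedBall (0:ℂ) 1 →
      ‖(1/4 : ℂ)^k * z^(64^k)‖ ≤ (1/4 : ℝ)^k := by
    intro k z hz
    exact F0_term_norm (mem_closedBall_zero_iff.mp hz) k
  have hU : TendstoUniformlyOn
      (fun (t : ℕ) (z : ℂ) => ∑ k ∈ Finset.range t, (1/4 : ℂ)^k * z^(64^k))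
      F0fun Filter.atTop (Metric.closedBall (0:ℂ) 1) :=
    tendstoUniformlyOn_tsum_nat summable_quarter hb
  have hU' := (hU.mono Metric.ball_subset_closedBall).tendstoLocallyUniformlyOn
  apply hU'.differentiableOn ?_ Metric.isOpen_ball
  filter_upwards with t
  apply Differentiable.differentiableOn
  apply Differentiable.fun_sum
  intro k _
  exact (differentiable_pow _).const_mul _

/-- The Weierstrass-type element of the disc algebra. -/
noncomputable def f0 : DiscAlgebra :=
  ⟨⟨fun z => F0fun z.1, F0_continuous⟩, by
    apply F0_diffOn.congr
    intro z hz
    rw [dif_pos (Metric.ball_subset_closedBall hz)]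
    rfl⟩

lemma bdry_f0_re (θ : ℝ) : (bdry f0 θ).re = uW θ := by
  have hnorm : ‖Complex.exp (θ * Complex.I)‖ ≤ 1 := by
    rw [Complex.norm_exp_ofReal_mul_I]
  have : bdry f0 θ = F0fun (Complex.exp (θ * Complex.I)) := rfl
  rw [this, F0fun, Complex.re_tsum (F0_summable hnorm), uW]
  congr 1
  funext k
  have hexp : Complex.exp (θ * Complex.I) ^ (64^k) =
      Complex.exp (((64^k * θ : ℝ) : ℂ) * Complex.I) := by
    rw [← Complex.exp_nat_mul]
    congr 1
    push_cast
    ring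
  rw [hexp]
  rw [show (1/4 : ℂ)^k = (((1/4 : ℝ)^k : ℝ) : ℂ) by push_cast; ring]
  rw [Complex.re_ofReal_mul, Complex.exp_ofReal_mul_I_re]

/-- The dite-extension of a disc algebra element to all of `ℂ`. -/
noncomputable def Gext (f : DiscAlgebra) : ℂ → ℂ :=
  fun z => if h : z ∈ Metric.closedBall (0:ℂ) 1 then f.1 ⟨z, h⟩ else 0

lemma Gext_eq (f : DiscAlgebra) {z : ℂ} (h : z ∈ Metric.closedBall (0:ℂ) 1) :
    Gext f z = f.1 ⟨z, h⟩ := dif_pos h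

lemma Gext_diffOn (f : DiscAlgebra) : DifferentiableOn ℂ (Gext f) (Metric.ball (0:ℂ) 1) := f.2

lemma mem_cb_of_mul {r : ℝ} (hr0 : 0 ≤ r) (hr1 : r ≤ 1) (z : Metric.closedBall (0:ℂ) 1) :
    ((r:ℂ)) * z.1 ∈ Metric.closedBall (0:ℂ) 1 := by
  rw [mem_closedBall_zero_iff, norm_mul, Complex.norm_real, Real.norm_eq_abs,
    abs_of_nonneg hr0]
  have hz := mem_closedBall_zero_iff.mp z.2
  calc r * ‖z.1‖ ≤ 1 * 1 := by
        apply mul_le_mul hr1 hz (norm_nonneg _) (by norm_num)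
    _ = 1 := by norm_num

/-- Dilation `z ↦ f (r z)` of a disc algebra element. -/
noncomputable def dilate (f : DiscAlgebra) (r : ℝ) (hr0 : 0 ≤ r) (hr1 : r ≤ 1) : DiscAlgebra :=
  ⟨⟨fun z => f.1 ⟨(r:ℂ) * z.1, mem_cb_of_mul hr0 hr1 z⟩,
    f.1.continuous.comp (Continuous.subtype_mk (continuous_const.mul continuous_subtype_val) _)⟩,
   by
    have hmaps : ∀ z ∈ Metric.ball (0:ℂ) 1, (r:ℂ) * z ∈ Metric.ball (0:ℂ) 1 := by
      intro z hz
      rw [mem_ball_zero_iff] at hz ⊢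
      rw [norm_mul, Complex.norm_real, Real.norm_eq_abs, abs_of_nonneg hr0]
      calc r * ‖z‖ ≤ 1 * ‖z‖ := by gcongr
        _ = ‖z‖ := one_mul _
        _ < 1 := hz
    have hcomp : DifferentiableOn ℂ (fun z : ℂ => Gext f ((r:ℂ) * z)) (Metric.ball (0:ℂ) 1) :=
      (Gext_diffOn f).comp ((differentiable_id.const_mul ((r:ℂ))).differentiableOn) hmaps
    apply hcomp.congr
    intro z hz
    have hzc := Metric.ball_subset_closedBall hz
    rw [dif_pos hzc, Gext_eq f (mem_cb_of_mul hr0 hr1 ⟨z, hzc⟩)]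
    rfl⟩

lemma bdry_dilate (f : DiscAlgebra) {r : ℝ} (hr0 : 0 ≤ r) (hr1 : r ≤ 1) (θ : ℝ) :
    bdry (dilate f r hr0 hr1) θ = Gext f ((r:ℂ) * Complex.exp (θ * Complex.I)) := by
  rw [Gext_eq f (mem_cb_of_mul hr0 hr1 ⟨_, exp_mem_closedBall θ⟩)]
  rfl

lemma norm_exp_mul_I (θ : ℝ) : ‖Complex.exp (θ * Complex.I)‖ = 1 := by
  rw [Complex.norm_exp_ofReal_mul_I]

lemma dilate_lip (f : DiscAlgebra) {r : ℝ} (hr0 : 0 ≤ r) (hr1 : r < 1) :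
    ∃ L : ℝ, 0 ≤ L ∧ ∀ x y : ℝ,
      |(bdry (dilate f r hr0 hr1.le) x).re - (bdry (dilate f r hr0 hr1.le) y).re|
        ≤ L * |x - y| := by
  set G := Gext f with hGdef
  have hG : DifferentiableOn ℂ G (Metric.ball (0:ℂ) 1) := Gext_diffOn f
  have hA : AnalyticOnNhd ℂ G (Metric.ball (0:ℂ) 1) :=
    hG.analyticOnNhd Metric.isOpen_ball
  have hdcont : ContinuousOn (deriv G) (Metric.ball (0:ℂ) 1) := hA.deriv.continuousOn
  set r' : ℝ := (1 + r)/2 with hr'def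
  have hrr' : r ≤ r' := by rw [hr'def]; linarith
  have hr'1 : r' < 1 := by rw [hr'def]; linarith
  have hsub : Metric.closedBall (0:ℂ) r' ⊆ Metric.ball (0:ℂ) 1 :=
    Metric.closedBall_subset_ball hr'1
  obtain ⟨C, hC⟩ := (isCompact_closedBall (0:ℂ) r').exists_bound_of_continuousOn
    (hdcont.mono hsub)
  refine ⟨max C 0, le_max_right _ _, ?_⟩
  -- the boundary curve and its derivative
  set φ : ℝ → ℂ := fun θ => G ((r:ℂ) * Complex.exp (θ * Complex.I)) with hφdef
  set D : ℝ → ℂ := fun θ =>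
    ((r:ℂ) * (Complex.I * Complex.exp (θ * Complex.I))) *
      deriv G ((r:ℂ) * Complex.exp (θ * Complex.I)) with hDdef
  have hmem : ∀ θ : ℝ, (r:ℂ) * Complex.exp (θ * Complex.I) ∈ Metric.ball (0:ℂ) 1 := by
    intro θ
    rw [mem_ball_zero_iff, norm_mul, Complex.norm_real, Real.norm_eq_abs,
      abs_of_nonneg hr0, norm_exp_mul_I, mul_one]
    exact hr1
  have hmem' : ∀ θ : ℝ, (r:ℂ) * Complex.exp (θ * Complex.I) ∈ Metric.closedBall (0:ℂ) r' := by
    intro θ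
    rw [mem_closedBall_zero_iff, norm_mul, Complex.norm_real, Real.norm_eq_abs,
      abs_of_nonneg hr0, norm_exp_mul_I, mul_one]
    exact hrr'
  have hinner : ∀ θ : ℝ, HasDerivAt (fun t : ℝ => (r:ℂ) * Complex.exp (t * Complex.I))
      ((r:ℂ) * (Complex.I * Complex.exp (θ * Complex.I))) θ := by
    intro θ
    have h1 : HasDerivAt (fun t : ℝ => ((t:ℂ)) * Complex.I) Complex.I θ := by
      simpa using (Complex.ofRealCLM.hasDerivAt (x := θ)).mul_const Complex.I
    have h2 : HasDerivAt (fun t : ℝ => Complex.exp ((t:ℂ) * Complex.I))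
        (Complex.I * Complex.exp ((θ:ℂ) * Complex.I)) θ := by
      have hc := ((Complex.hasDerivAt_exp ((θ:ℂ) * Complex.I)).hasFDerivAt.restrictScalars
        ℝ).comp_hasDerivAt θ h1
      refine hc.congr_deriv ?_
      simp
    exact h2.const_mul _
  have hD : ∀ θ : ℝ, HasDerivAt φ (D θ) θ := by
    intro θ
    have hw := hmem θ
    have hGd : HasDerivAt G (deriv G ((r:ℂ) * Complex.exp (θ * Complex.I)))
        ((r:ℂ) * Complex.exp (θ * Complex.I)) :=
      (hG.differentiableAt (Metric.isOpen_ball.mem_nhds hw)).hasDerivAt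
    have hc := (hGd.hasFDerivAt.restrictScalars ℝ).comp_hasDerivAt θ (hinner θ)
    refine hc.congr_deriv ?_
    simp [hDdef]
  have hDb : ∀ θ : ℝ, ‖D θ‖ ≤ max C 0 := by
    intro θ
    have h1 : ‖deriv G ((r:ℂ) * Complex.exp (θ * Complex.I))‖ ≤ C := hC _ (hmem' θ)
    have h2 : ‖(r:ℂ) * (Complex.I * Complex.exp (θ * Complex.I))‖ = r := by
      rw [norm_mul, norm_mul, Complex.norm_real, Real.norm_eq_abs, abs_of_nonneg hr0,
        Complex.norm_I, norm_exp_mul_I]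
      ring
    rw [hDdef]
    calc ‖(r:ℂ) * (Complex.I * Complex.exp (θ * Complex.I)) *
          deriv G ((r:ℂ) * Complex.exp (θ * Complex.I))‖
        = r * ‖deriv G ((r:ℂ) * Complex.exp (θ * Complex.I))‖ := by rw [norm_mul, h2]
      _ ≤ 1 * max C 0 := by
          apply mul_le_mul hr1.le (le_trans h1 (le_max_left _ _))
            (norm_nonneg _) (by norm_num)
      _ = max C 0 := one_mul _
  have hMVT : ∀ x y : ℝ, ‖φ x - φ y‖ ≤ max C 0 * ‖x - y‖ := by
    intro x y
    exact convex_univ.norm_image_sub_le_of_norm_hasDerivWithin_le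
      (fun t _ => (hD t).hasDerivWithinAt) (fun t _ => hDb t)
      (Set.mem_univ y) (Set.mem_univ x)
  intro x y
  have hφx : bdry (dilate f r hr0 hr1.le) x = φ x := bdry_dilate f hr0 hr1.le x
  have hφy : bdry (dilate f r hr0 hr1.le) y = φ y := bdry_dilate f hr0 hr1.le y
  rw [hφx, hφy]
  calc |(φ x).re - (φ y).re| = |(φ x - φ y).re| := by rw [Complex.sub_re]
    _ ≤ ‖φ x - φ y‖ := by
        exact Complex.abs_re_le_norm _
    _ ≤ max C 0 * ‖x - y‖ := hMVT x y
    _ = max C 0 * |x - y| := by rw [Real.norm_eq_abs]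

theorem Sset_dense : Dense Sset := by
  rw [Metric.dense_iff]
  intro f ε hε
  -- uniform continuity of f on the closed disc
  have huc : UniformContinuous f.1 :=
    CompactSpace.uniformContinuous_of_continuous f.1.continuous
  obtain ⟨δ, hδ0, hδ⟩ := Metric.uniformContinuous_iff.mp huc (ε/3) (by linarith)
  set r : ℝ := 1 - min (δ/2) (1/2) with hrdef
  have hmin0 : 0 < min (δ/2) (1/2) := lt_min (by linarith) (by norm_num)
  have hmin1 : min (δ/2) (1/2) ≤ 1/2 := min_le_right _ _
  have hminδ : min (δ/2) (1/2) ≤ δ/2 := min_le_left _ _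
  have hr0 : 0 ≤ r := by rw [hrdef]; linarith
  have hr1 : r < 1 := by rw [hrdef]; linarith
  set fr := dilate f r hr0 hr1.le with hfrdef
  obtain ⟨L, hL0, hLip⟩ := dilate_lip f hr0 hr1
  set c : ℝ := ε/12 with hcdef
  have hc0 : 0 < c := by rw [hcdef]; linarith
  -- the perturbed element g = fr + c • f0
  have hgdiff : DifferentiableOn ℂ
      (fun z : ℂ => if h : z ∈ Metric.closedBall (0 : ℂ) 1 then
        (fr.1 + ((c:ℝ):ℂ) • f0.1) ⟨z, h⟩ else 0)
      (Metric.ball (0 : ℂ) 1) := by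
    have hsum : DifferentiableOn ℂ
        (fun z : ℂ => Gext fr z + ((c:ℝ):ℂ) * F0fun z) (Metric.ball (0:ℂ) 1) :=
      (Gext_diffOn fr).add ((differentiableOn_const _).mul F0_diffOn)
    apply hsum.congr
    intro z hz
    have hzc := Metric.ball_subset_closedBall hz
    rw [dif_pos hzc, Gext_eq fr hzc]
    rw [ContinuousMap.add_apply, ContinuousMap.smul_apply, smul_eq_mul]
    rfl
  set g : DiscAlgebra := ⟨fr.1 + ((c:ℝ):ℂ) • f0.1, hgdiff⟩ with hgdef
  -- boundary real part of g
  have hbg : ∀ θ : ℝ, (bdry g θ).re = (bdry fr θ).re + c * uW θ := by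
    intro θ
    have h1 : bdry g θ = bdry fr θ + ((c:ℝ):ℂ) * bdry f0 θ := by
      show (fr.1 + ((c:ℝ):ℂ) • f0.1) _ = _
      rw [ContinuousMap.add_apply, ContinuousMap.smul_apply, smul_eq_mul]
      rfl
    rw [h1, Complex.add_re, Complex.re_ofReal_mul, bdry_f0_re]
  -- g belongs to Sset
  have hmem : g ∈ Sset := by
    intro n hn θ
    obtain ⟨y, hy, hlt⟩ := comb hL0 hc0 (fun t => (bdry fr t).re)
      (fun x y => hLip x y) n hn θ
    refine ⟨y, hy, ?_⟩
    rw [gt_iff_lt, hbg y, hbg θ]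
    exact hlt
  -- distance estimates
  have hgfr : dist g fr ≤ ε/6 := by
    have h1 : dist g fr = dist g.1 fr.1 := Subtype.dist_eq g fr
    rw [h1]
    rw [ContinuousMap.dist_le (by linarith)]
    intro z
    have h2 : g.1 z = fr.1 z + ((c:ℝ):ℂ) * f0.1 z := by
      show (fr.1 + ((c:ℝ):ℂ) • f0.1) z = _
      rw [ContinuousMap.add_apply, ContinuousMap.smul_apply, smul_eq_mul]
    rw [h2, dist_eq_norm]
    have h3 : fr.1 z + ((c:ℝ):ℂ) * f0.1 z - fr.1 z = ((c:ℝ):ℂ) * f0.1 z := by ring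
    rw [h3, norm_mul, Complex.norm_real, Real.norm_eq_abs, abs_of_pos hc0]
    have h4 : ‖f0.1 z‖ ≤ 2 := F0_norm_le (mem_closedBall_zero_iff.mp z.2)
    calc c * ‖f0.1 z‖ ≤ c * 2 := by gcongr
      _ = ε/6 := by rw [hcdef]; ring
  have hfrf : dist fr f ≤ ε/3 := by
    have h1 : dist fr f = dist fr.1 f.1 := Subtype.dist_eq fr f
    rw [h1]
    rw [ContinuousMap.dist_le (by linarith)]
    intro z
    have hsub : dist (⟨(r:ℂ) * z.1, mem_cb_of_mul hr0 hr1.le z⟩ :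
        Metric.closedBall (0:ℂ) 1) z < δ := by
      rw [Subtype.dist_eq, dist_eq_norm]
      have h2 : ((r:ℂ)) * z.1 - z.1 = ((r:ℝ) - 1 : ℝ) * z.1 := by push_cast; ring
      rw [h2, norm_mul, Complex.norm_real, Real.norm_eq_abs]
      have h3 : |r - 1| = min (δ/2) (1/2) := by
        rw [abs_of_nonpos (by linarith), hrdef]; ring
      rw [h3]
      have h4 : ‖z.1‖ ≤ 1 := mem_closedBall_zero_iff.mp z.2
      calc min (δ/2) (1/2) * ‖z.1‖ ≤ min (δ/2) (1/2) * 1 := by gcongr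
        _ = min (δ/2) (1/2) := mul_one _
        _ ≤ δ/2 := hminδ
        _ < δ := by linarith
    have h5 : fr.1 z = f.1 ⟨(r:ℂ) * z.1, mem_cb_of_mul hr0 hr1.le z⟩ := rfl
    rw [h5]
    exact le_of_lt (hδ hsub)
  have hdist : dist g f < ε := by
    calc dist g f ≤ dist g fr + dist fr f := dist_triangle _ _ _
      _ ≤ ε/6 + ε/3 := add_le_add hgfr hfrf
      _ < ε := by linarith
  exact ⟨g, Metric.mem_ball.mpr hdist, hmem⟩
end

section
/- Generically, for f in the disc algebra A(D), both the real part u(θ) = Re f(e^{iθ}) and the imaginary part ũ(θ) = Im f(e^{iθ}) are nowhere differentiable functions of θ ∈ ℝ: the set of such f contains a dense G_δ subset of A(D). -/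
open scoped Classical

/- ------------------------------------------------------------------ -/
/- Auxiliary development                                               -/
/- ------------------------------------------------------------------ -/

namespace NDAux

open Metric Set Complex

/-- The canonical extension of a continuous map on the closed disc to all of `ℂ`. -/
noncomputable def extC (F : C(Metric.closedBall (0 : ℂ) 1, ℂ)) (z : ℂ) : ℂ :=
  if h : z ∈ Metric.closedBall (0 : ℂ) 1 then F ⟨z, h⟩ else 0

lemma extC_apply (F : C(Metric.closedBall (0 : ℂ) 1, ℂ)) {z : ℂ}
    (h : z ∈ Metric.closedBall (0 : ℂ) 1) : extC F z = F ⟨z, h⟩ := dif_pos h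

/-- The extension of `f ∈ A(D)`. -/
noncomputable def extFun (f : DiscAlgebra) : ℂ → ℂ := extC f.1

lemma extFun_apply (f : DiscAlgebra) {z : ℂ}
    (h : z ∈ Metric.closedBall (0 : ℂ) 1) : extFun f z = f.1 ⟨z, h⟩ := dif_pos h

lemma extFun_diff (f : DiscAlgebra) :
    DifferentiableOn ℂ (extFun f) (Metric.ball (0 : ℂ) 1) := f.2

lemma continuousOn_extC (F : C(Metric.closedBall (0 : ℂ) 1, ℂ)) :
    ContinuousOn (extC F) (Metric.closedBall (0 : ℂ) 1) := by
  rw [continuousOn_iff_continuous_restrict]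
  have : (Metric.closedBall (0 : ℂ) 1).restrict (extC F) = F := by
    funext z
    exact extC_apply F z.2
  have hc := map_continuous F
  rw [← this] at hc
  exact hc

lemma continuousOn_extFun (f : DiscAlgebra) :
    ContinuousOn (extFun f) (Metric.closedBall (0 : ℂ) 1) := continuousOn_extC f.1

/-- Constructor for disc algebra elements from a globally defined function. -/
noncomputable def mk (F : ℂ → ℂ) (hc : ContinuousOn F (Metric.closedBall (0 : ℂ) 1))
    (hd : DifferentiableOn ℂ F (Metric.ball (0 : ℂ) 1)) : DiscAlgebra :=
  ⟨⟨(Metric.closedBall (0 : ℂ) 1).restrict F, continuousOn_iff_continuous_restrict.mp hc⟩, by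
    apply hd.congr
    intro z hz
    have hz' : z ∈ Metric.closedBall (0 : ℂ) 1 := Metric.ball_subset_closedBall hz
    show (if h : z ∈ Metric.closedBall (0 : ℂ) 1 then _ else (0 : ℂ)) = F z
    rw [dif_pos hz']
    rfl⟩

lemma extFun_mk (F : ℂ → ℂ) (hc : ContinuousOn F (Metric.closedBall (0 : ℂ) 1))
    (hd : DifferentiableOn ℂ F (Metric.ball (0 : ℂ) 1)) {z : ℂ}
    (h : z ∈ Metric.closedBall (0 : ℂ) 1) : extFun (mk F hc hd) z = F z := by
  rw [extFun_apply _ h]; rfl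

lemma bdry_mk (F : ℂ → ℂ) (hc : ContinuousOn F (Metric.closedBall (0 : ℂ) 1))
    (hd : DifferentiableOn ℂ F (Metric.ball (0 : ℂ) 1)) (θ : ℝ) :
    bdry (mk F hc hd) θ = F (Complex.exp (θ * Complex.I)) := rfl

lemma dist_eq_dist_coe (f g : DiscAlgebra) : dist f g = dist f.1 g.1 := rfl

lemma dist_le_of_forall {f g : DiscAlgebra} {C : ℝ} (hC : 0 ≤ C)
    (h : ∀ z, z ∈ Metric.closedBall (0 : ℂ) 1 →
      ‖extFun f z - extFun g z‖ ≤ C) : dist f g ≤ C := by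
  rw [dist_eq_dist_coe, ContinuousMap.dist_le hC]
  intro x
  have := h x.1 x.2
  rw [extFun_apply f x.2, extFun_apply g x.2] at this
  simpa [Complex.dist_eq] using this

lemma abs_bdry_sub_le (f g : DiscAlgebra) (θ : ℝ) :
    ‖bdry f θ - bdry g θ‖ ≤ dist f g := by
  have := ContinuousMap.dist_apply_le_dist
    (f := f.1) (g := g.1) (⟨Complex.exp (θ * Complex.I), exp_mem_closedBall θ⟩)
  simpa [bdry, Complex.dist_eq, dist_eq_dist_coe] using this

/-- `θ ↦ e^{iθ}` is uniformly continuous. -/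
lemma uniformContinuous_expI : UniformContinuous (fun θ : ℝ => Complex.exp (θ * Complex.I)) := by
  have hcos : LipschitzWith 1 Real.cos := by
    apply lipschitzWith_of_nnnorm_deriv_le Real.differentiable_cos
    intro x
    rw [Real.deriv_cos]
    rw [← NNReal.coe_le_coe, coe_nnnorm, Real.norm_eq_abs, NNReal.coe_one, abs_neg]
    exact Real.abs_sin_le_one x
  have hsin : LipschitzWith 1 Real.sin := by
    apply lipschitzWith_of_nnnorm_deriv_le Real.differentiable_sin
    intro x
    rw [Real.deriv_sin]
    rw [← NNReal.coe_le_coe, coe_nnnorm, Real.norm_eq_abs, NNReal.coe_one]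
    exact Real.abs_cos_le_one x
  have h1 : UniformContinuous fun θ : ℝ => (Real.cos θ : ℂ) :=
    Complex.isometry_ofReal.uniformContinuous.comp hcos.uniformContinuous
  have h2 : UniformContinuous fun θ : ℝ => (Real.sin θ : ℂ) * Complex.I := by
    have : LipschitzWith 1 fun z : ℂ => z * Complex.I := by
      apply LipschitzWith.of_dist_le_mul
      intro a b
      simp [Complex.dist_eq, ← sub_mul, map_mul]
    exact this.uniformContinuous.comp
      (Complex.isometry_ofReal.uniformContinuous.comp hsin.uniformContinuous)
  have : (fun θ : ℝ => Complex.exp (θ * Complex.I)) =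
      fun θ : ℝ => (Real.cos θ : ℂ) + (Real.sin θ : ℂ) * Complex.I := by
    funext θ
    rw [Complex.exp_mul_I, Complex.ofReal_cos, Complex.ofReal_sin]
  rw [this]
  exact h1.add h2

lemma uniformContinuous_bdry (f : DiscAlgebra) : UniformContinuous (bdry f) := by
  have h1 : UniformContinuous f.1 :=
    CompactSpace.uniformContinuous_of_continuous (map_continuous f.1)
  have h2 : UniformContinuous fun θ : ℝ =>
      (⟨Complex.exp (θ * Complex.I), exp_mem_closedBall θ⟩ :
        Metric.closedBall (0 : ℂ) 1) :=
    uniformContinuous_expI.subtype_mk _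
  exact h1.comp h2

/-- Completeness of the disc algebra. -/
noncomputable instance : CompleteSpace DiscAlgebra := by
  change CompleteSpace {f : C(Metric.closedBall (0 : ℂ) 1, ℂ) //
    DifferentiableOn ℂ (extC f) (Metric.ball (0 : ℂ) 1)}
  suffices hcl : IsClosed {f : C(Metric.closedBall (0 : ℂ) 1, ℂ) |
      DifferentiableOn ℂ (extC f) (Metric.ball (0 : ℂ) 1)} by
    haveI := hcl
    exact IsClosed.completeSpace_coe (s := {f : C(Metric.closedBall (0 : ℂ) 1, ℂ) |
      DifferentiableOn ℂ (extC f) (Metric.ball (0 : ℂ) 1)})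
  apply IsSeqClosed.isClosed
  intro F f hF htend
  have hball : TendstoUniformlyOn (fun k => extC (F k)) (extC f) Filter.atTop
      (Metric.ball (0 : ℂ) 1) := by
    rw [Metric.tendstoUniformlyOn_iff]
    intro ε hε
    have := (Metric.tendsto_atTop.mp htend) ε hε
    obtain ⟨N, hN⟩ := this
    refine Filter.eventually_atTop.mpr ⟨N, fun k hk z hz => ?_⟩
    have hz' : z ∈ Metric.closedBall (0 : ℂ) 1 := Metric.ball_subset_closedBall hz
    rw [extC_apply f hz', extC_apply (F k) hz']
    calc dist (f ⟨z, hz'⟩) ((F k) ⟨z, hz'⟩) ≤ dist f (F k) :=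
          ContinuousMap.dist_apply_le_dist _
      _ = dist (F k) f := dist_comm _ _
      _ < ε := hN k hk
  exact hball.tendstoLocallyUniformlyOn.differentiableOn
    (Filter.Eventually.of_forall fun k => hF k) Metric.isOpen_ball

/-- Finding a point congruent to `α` mod `2π` in any window `(a, a + 2π]`. -/
lemma exists_cong (a α : ℝ) :
    ∃ s ∈ Set.Ioc a (a + 2 * Real.pi),
      Real.cos s = Real.cos α ∧ Real.sin s = Real.sin α := by
  have hpi : (0 : ℝ) < 2 * Real.pi := by positivity
  set k : ℤ := ⌊(a - α) / (2 * Real.pi)⌋ + 1 with hk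
  refine ⟨α + k * (2 * Real.pi), ⟨?_, ?_⟩, Real.cos_add_int_mul_two_pi α k,
    Real.sin_add_int_mul_two_pi α k⟩
  · have h1 : (a - α) / (2 * Real.pi) < k := by
      rw [hk]; push_cast; exact Int.lt_floor_add_one _
    have hx : (a - α) / (2 * Real.pi) * (2 * Real.pi) = a - α :=
      div_mul_cancel₀ _ (ne_of_gt hpi)
    nlinarith [mul_lt_mul_of_pos_right h1 hpi]
  · have h2 : (k : ℝ) - 1 ≤ (a - α) / (2 * Real.pi) := by
      rw [hk]; push_cast; simpa using Int.floor_le ((a - α) / (2 * Real.pi))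
    have hx : (a - α) / (2 * Real.pi) * (2 * Real.pi) = a - α :=
      div_mul_cancel₀ _ (ne_of_gt hpi)
    nlinarith [mul_le_mul_of_nonneg_right h2 (le_of_lt hpi)]

lemma sqrt_two_ge_one : (1 : ℝ) ≤ Real.sqrt 2 := by
  nlinarith [Real.sq_sqrt (by norm_num : (0:ℝ) ≤ 2), Real.sqrt_nonneg 2]

lemma re_val (s : ℝ) :
    ((1 + Complex.I) * Complex.exp (s * Complex.I)).re = Real.cos s - Real.sin s := by
  rw [Complex.exp_mul_I]
  simp [Complex.add_re, Complex.mul_re, Complex.cos_ofReal_re, Complex.sin_ofReal_re,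
    Complex.cos_ofReal_im, Complex.sin_ofReal_im]
  try ring

lemma im_val (s : ℝ) :
    ((1 + Complex.I) * Complex.exp (s * Complex.I)).im = Real.cos s + Real.sin s := by
  rw [Complex.exp_mul_I]
  simp [Complex.add_im, Complex.mul_im, Complex.cos_ofReal_re, Complex.sin_ofReal_re,
    Complex.cos_ofReal_im, Complex.sin_ofReal_im]
  try ring

/-- Oscillation witness for the real part. -/
lemma exists_osc_re (a c : ℝ) :
    ∃ s ∈ Set.Ioc a (a + 2 * Real.pi),
      1 ≤ |((1 + Complex.I) * Complex.exp (s * Complex.I)).re - c| := by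
  by_cases hc : c ≤ 0
  · -- use point where cos - sin = √2, namely s ≡ -π/4
    obtain ⟨s, hs, hcos, hsin⟩ := exists_cong a (-(Real.pi / 4))
    refine ⟨s, hs, ?_⟩
    rw [re_val, hcos, hsin, Real.cos_neg, Real.sin_neg, Real.cos_pi_div_four,
      Real.sin_pi_div_four]
    have := sqrt_two_ge_one
    exact le_abs.mpr (Or.inl (by linarith))
  · -- use point where cos - sin = -√2, namely s ≡ 3π/4 = π - π/4
    obtain ⟨s, hs, hcos, hsin⟩ := exists_cong a (Real.pi - Real.pi / 4)
    refine ⟨s, hs, ?_⟩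
    rw [re_val, hcos, hsin, Real.cos_pi_sub, Real.sin_pi_sub, Real.cos_pi_div_four,
      Real.sin_pi_div_four]
    have := sqrt_two_ge_one
    exact le_abs.mpr (Or.inr (by push_neg at hc; linarith))

/-- Oscillation witness for the imaginary part. -/
lemma exists_osc_im (a c : ℝ) :
    ∃ s ∈ Set.Ioc a (a + 2 * Real.pi),
      1 ≤ |((1 + Complex.I) * Complex.exp (s * Complex.I)).im - c| := by
  by_cases hc : c ≤ 0
  · -- use point where cos + sin = √2, namely s ≡ π/4
    obtain ⟨s, hs, hcos, hsin⟩ := exists_cong a (Real.pi / 4)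
    refine ⟨s, hs, ?_⟩
    rw [im_val, hcos, hsin, Real.cos_pi_div_four, Real.sin_pi_div_four]
    have := sqrt_two_ge_one
    exact le_abs.mpr (Or.inl (by linarith))
  · -- use point where cos + sin = -√2, namely s ≡ -(π - π/4)
    obtain ⟨s, hs, hcos, hsin⟩ := exists_cong a (-(Real.pi - Real.pi / 4))
    refine ⟨s, hs, ?_⟩
    rw [im_val, hcos, hsin, Real.cos_neg, Real.sin_neg, Real.cos_pi_sub, Real.sin_pi_sub,
      Real.cos_pi_div_four, Real.sin_pi_div_four]
    have := sqrt_two_ge_one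
    exact le_abs.mpr (Or.inr (by push_neg at hc; linarith))

/-- The oscillation property with a margin `η`. -/
def P (n : ℕ) (η : ℝ) (g : DiscAlgebra) : Prop :=
  ∀ θ : ℝ,
    (∃ y ∈ Set.Ioo θ (θ + 1 / (n : ℝ)),
      (n : ℝ) * |y - θ| + 2 * η < |(bdry g y).re - (bdry g θ).re|) ∧
    (∃ y ∈ Set.Ioo θ (θ + 1 / (n : ℝ)),
      (n : ℝ) * |y - θ| + 2 * η < |(bdry g y).im - (bdry g θ).im|)

/-- The open sets. -/
def U (n : ℕ) : Set DiscAlgebra :=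
  {h | ∃ g η, 0 < η ∧ dist h g < η ∧ P n η g}

lemma isOpen_U (n : ℕ) : IsOpen (U n) := by
  rw [Metric.isOpen_iff]
  rintro h ⟨g, η, hη, hdist, hP⟩
  refine ⟨η - dist h g, by linarith, fun h' hh' => ⟨g, η, hη, ?_, hP⟩⟩
  rw [Metric.mem_ball] at hh'
  calc dist h' g ≤ dist h' h + dist h g := dist_triangle _ _ _
    _ < η := by linarith

/-- Transfer of oscillation bounds between nearby values. -/
lemma abs_transfer {x₁ x₂ g₁ g₂ η M : ℝ} (h1 : |x₁ - g₁| < η) (h2 : |x₂ - g₂| < η)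
    (h3 : M + 2 * η < |g₁ - g₂|) : M < |x₁ - x₂| := by
  have e : g₁ - g₂ = (x₁ - x₂) - (x₁ - g₁) + (x₂ - g₂) := by ring
  have t : |g₁ - g₂| ≤ |x₁ - x₂| + |x₁ - g₁| + |x₂ - g₂| := by
    rw [e]
    calc |(x₁ - x₂) - (x₁ - g₁) + (x₂ - g₂)|
        ≤ |(x₁ - x₂) - (x₁ - g₁)| + |x₂ - g₂| := abs_add_le _ _
      _ ≤ |x₁ - x₂| + |x₁ - g₁| + |x₂ - g₂| := add_le_add (abs_sub _ _) le_rfl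
  linarith

/-- Membership in `U n` gives the oscillation property without margin. -/
lemma U_oscillation {n : ℕ} {h : DiscAlgebra} (hh : h ∈ U n) (θ : ℝ) :
    (∃ y ∈ Set.Ioo θ (θ + 1 / (n : ℝ)),
      (n : ℝ) * |y - θ| < |(bdry h y).re - (bdry h θ).re|) ∧
    (∃ y ∈ Set.Ioo θ (θ + 1 / (n : ℝ)),
      (n : ℝ) * |y - θ| < |(bdry h y).im - (bdry h θ).im|) := by
  obtain ⟨g, η, hη, hdist, hP⟩ := hh
  obtain ⟨⟨y₁, hy₁, hre⟩, ⟨y₂, hy₂, him⟩⟩ := hP θ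
  have keyre : ∀ t : ℝ, |(bdry h t).re - (bdry g t).re| < η := by
    intro t
    have h1 : |(bdry h t - bdry g t).re| ≤ ‖bdry h t - bdry g t‖ :=
      Complex.abs_re_le_norm _
    rw [Complex.sub_re] at h1
    exact lt_of_le_of_lt (h1.trans (abs_bdry_sub_le h g t)) hdist
  have keyim : ∀ t : ℝ, |(bdry h t).im - (bdry g t).im| < η := by
    intro t
    have h1 : |(bdry h t - bdry g t).im| ≤ ‖bdry h t - bdry g t‖ :=
      Complex.abs_im_le_norm _
    rw [Complex.sub_im] at h1
    exact lt_of_le_of_lt (h1.trans (abs_bdry_sub_le h g t)) hdist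
  exact ⟨⟨y₁, hy₁, abs_transfer (keyre y₁) (keyre θ) hre⟩,
    ⟨y₂, hy₂, abs_transfer (keyim y₂) (keyim θ) him⟩⟩

set_option maxHeartbeats 1000000 in
/-- Density of `U n` for `n ≥ 1`. -/
lemma dense_U {n : ℕ} (hn : 0 < n) : Dense (U n) := by
  rw [Metric.dense_iff]
  intro f ε hε
  set δ : ℝ := ε / 4 with hδdef
  have hδpos : 0 < δ := by positivity
  have hnR : (0 : ℝ) < n := by exact_mod_cast hn
  have hπ : (0 : ℝ) < Real.pi := Real.pi_pos
  -- modulus of uniform continuity of the boundary values of f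
  obtain ⟨τ, hτ, hmod⟩ :=
    Metric.uniformContinuous_iff.mp (uniformContinuous_bdry f) (δ / 8) (by positivity)
  -- choose the frequency m
  obtain ⟨m, hm⟩ := exists_nat_gt
    (max (2 * Real.pi / τ) (max (2 * Real.pi * n) (4 * Real.pi * n / δ)))
  set M : ℝ := (m : ℝ) with hMdef
  have hM0 : 0 < M := by
    have h1 : 2 * Real.pi * n ≤ max (2 * Real.pi / τ) (max (2 * Real.pi * n) (4 * Real.pi * n / δ)) :=
      le_trans (le_max_left _ _) (le_max_right _ _)
    have : (0:ℝ) < 2 * Real.pi * n := by positivity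
    linarith [lt_of_le_of_lt h1 hm]
  have hMτ : 2 * Real.pi / M < τ := by
    have h1 : 2 * Real.pi / τ < M := lt_of_le_of_lt (le_max_left _ _) hm
    rw [div_lt_iff₀ hτ] at h1
    rw [div_lt_iff₀ hM0]
    nlinarith
  have hMn : 2 * Real.pi / M < 1 / (n : ℝ) := by
    have h1 : 2 * Real.pi * n < M :=
      lt_of_le_of_lt (le_trans (le_max_left _ _) (le_max_right _ _)) hm
    rw [div_lt_div_iff₀ hM0 hnR]
    nlinarith
  have hMd : (n : ℝ) * (2 * Real.pi / M) ≤ δ / 2 := by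
    have h1 : 4 * Real.pi * n / δ < M :=
      lt_of_le_of_lt (le_trans (le_max_right _ _) (le_max_right _ _)) hm
    rw [div_lt_iff₀ hδpos] at h1
    have e : (n : ℝ) * (2 * Real.pi / M) = 2 * Real.pi * n / M := by ring
    rw [e, div_le_iff₀ hM0]
    nlinarith
  -- the perturbed function
  set F : ℂ → ℂ := fun z => extFun f z + (δ : ℂ) * (1 + Complex.I) * z ^ m with hF
  have hcF : ContinuousOn F (Metric.closedBall (0 : ℂ) 1) :=
    (continuousOn_extFun f).add (Continuous.continuousOn (by continuity))
  have hdF : DifferentiableOn ℂ F (Metric.ball (0 : ℂ) 1) :=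
    (extFun_diff f).add (Differentiable.differentiableOn (by fun_prop))
  set g : DiscAlgebra := mk F hcF hdF with hg
  -- the boundary values of g
  have hbg : ∀ t : ℝ, bdry g t =
      bdry f t + (δ : ℂ) * ((1 + Complex.I) * Complex.exp (((M * t : ℝ)) * Complex.I)) := by
    intro t
    rw [hg, bdry_mk]
    simp only [hF]
    have h1 : extFun f (Complex.exp (t * Complex.I)) = bdry f t :=
      extFun_apply f (exp_mem_closedBall t)
    have h2 : Complex.exp (t * Complex.I) ^ m =
        Complex.exp (((M * t : ℝ)) * Complex.I) := by
      rw [← Complex.exp_nat_mul]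
      congr 1
      push_cast [hMdef]
      ring
    rw [h1, h2]
    ring
  -- distance to f
  have hdistgf : dist g f < ε := by
    have hle : dist g f ≤ ε / 2 := by
      apply dist_le_of_forall (by positivity)
      intro z hz
      have h1 : extFun g z = F z := extFun_mk F hcF hdF hz
      have h2 : ‖z‖ ≤ 1 := by
        rw [Metric.mem_closedBall, Complex.dist_eq, sub_zero] at hz
        exact hz
      rw [h1, hF]
      simp only [add_sub_cancel_left]
      rw [norm_mul, norm_mul, norm_pow]
      have h3 : ‖(1 + Complex.I)‖ ≤ 2 := by
        calc ‖(1 + Complex.I)‖ ≤ ‖(1 : ℂ)‖ + ‖Complex.I‖ :=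
              norm_add_le _ _
          _ = 2 := by norm_num
      have h4 : ‖z‖ ^ m ≤ 1 := pow_le_one₀ (norm_nonneg z) h2
      have h5 : ‖(δ : ℂ)‖ = δ := by
        rw [Complex.norm_of_nonneg hδpos.le]
      rw [h5]
      calc δ * ‖(1 + Complex.I)‖ * ‖z‖ ^ m ≤ δ * 2 * 1 := by
            apply mul_le_mul (mul_le_mul_of_nonneg_left h3 (le_of_lt hδpos)) h4
              (pow_nonneg (norm_nonneg z) m) (by positivity)
        _ = ε / 2 := by rw [hδdef]; ring
    linarith
  -- the oscillation estimates
  set η : ℝ := δ / 16 with hηdef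
  have hηpos : 0 < η := by positivity
  refine ⟨g, Metric.mem_ball.mpr hdistgf, g, η, hηpos, by simp [dist_self, hηpos], ?_⟩
  intro θ
  -- common facts about the chosen y given a witness s
  have hyfact : ∀ s : ℝ, s ∈ Set.Ioc (M * θ) (M * θ + 2 * Real.pi) →
      s / M ∈ Set.Ioo θ (θ + 1 / (n : ℝ)) ∧ |s / M - θ| ≤ 2 * Real.pi / M ∧
        M * (s / M) = s := by
    intro s hs
    have h1 : θ < s / M := by
      rw [lt_div_iff₀ hM0]
      nlinarith [hs.1]
    have h2 : s / M ≤ θ + 2 * Real.pi / M := by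
      have hx : 2 * Real.pi / M * M = 2 * Real.pi := div_mul_cancel₀ _ (ne_of_gt hM0)
      rw [div_le_iff₀ hM0]
      nlinarith [hs.2]
    refine ⟨⟨h1, by linarith⟩, ?_, by field_simp⟩
    rw [abs_of_pos (by linarith)]
    linarith
  have hcore : ∀ (s y : ℝ), y ∈ Set.Ioo θ (θ + 1 / (n : ℝ)) → |y - θ| ≤ 2 * Real.pi / M →
      M * y = s →
      ∀ c : ℂ → ℝ, (∀ a b : ℂ, c (a + b) = c a + c b) →
      (∀ r : ℝ, ∀ w : ℂ, c ((r : ℂ) * w) = r * c w) →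
      (∀ a b : ℂ, |c a - c b| ≤ ‖a - b‖) →
      1 ≤ |c ((1 + Complex.I) * Complex.exp (s * Complex.I)) -
            c ((1 + Complex.I) * Complex.exp (((M * θ : ℝ)) * Complex.I))| →
      (n : ℝ) * |y - θ| + 2 * η < |c (bdry g y) - c (bdry g θ)| := by
    intro s y hy hyM hMy c hadd hmul hlip hosc
    have hfy : |c (bdry f y) - c (bdry f θ)| < δ / 8 := by
      have hd : dist y θ < τ := by
        rw [Real.dist_eq]
        linarith [hyM, hMτ]
      have := hmod hd
      rw [Complex.dist_eq] at this
      exact lt_of_le_of_lt (hlip _ _) this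
    have hby := hbg y
    have hbθ := hbg θ
    have ey : c (bdry g y) = c (bdry f y) +
        δ * c ((1 + Complex.I) * Complex.exp (((M * y : ℝ)) * Complex.I)) := by
      rw [hby, hadd, hmul]
    have eθ : c (bdry g θ) = c (bdry f θ) +
        δ * c ((1 + Complex.I) * Complex.exp (((M * θ : ℝ)) * Complex.I)) := by
      rw [hbθ, hadd, hmul]
    set B : ℝ := c ((1 + Complex.I) * Complex.exp (((M * y : ℝ)) * Complex.I)) -
        c ((1 + Complex.I) * Complex.exp (((M * θ : ℝ)) * Complex.I)) with hB
    have hosc' : 1 ≤ |B| := by rw [hB, hMy]; exact hosc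
    have eΔ : c (bdry g y) - c (bdry g θ) =
        (c (bdry f y) - c (bdry f θ)) + δ * B := by
      rw [ey, eθ, hB]; ring
    have hδB : δ ≤ |δ * B| := by
      rw [abs_mul, abs_of_pos hδpos]
      nlinarith
    have htri : |δ * B| ≤ |c (bdry g y) - c (bdry g θ)| + |c (bdry f y) - c (bdry f θ)| := by
      have e2 : δ * B = (c (bdry g y) - c (bdry g θ)) - (c (bdry f y) - c (bdry f θ)) := by
        rw [eΔ]; ring
      rw [e2]
      exact abs_sub _ _
    have hnyθ : (n : ℝ) * |y - θ| ≤ δ / 2 := by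
      have : (n : ℝ) * |y - θ| ≤ (n : ℝ) * (2 * Real.pi / M) :=
        mul_le_mul_of_nonneg_left hyM (le_of_lt hnR)
      linarith [hMd]
    rw [hηdef]
    linarith
  constructor
  · obtain ⟨s, hs, hosc⟩ := exists_osc_re (M * θ)
      (((1 + Complex.I) * Complex.exp (((M * θ : ℝ)) * Complex.I)).re)
    obtain ⟨hy, hyM, hMy⟩ := hyfact s hs
    refine ⟨s / M, hy, ?_⟩
    exact hcore s (s / M) hy hyM hMy Complex.re (fun a b => Complex.add_re a b)
      (fun r w => Complex.re_ofReal_mul r w)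
      (fun a b => by rw [← Complex.sub_re]; exact Complex.abs_re_le_norm _) hosc
  · obtain ⟨s, hs, hosc⟩ := exists_osc_im (M * θ)
      (((1 + Complex.I) * Complex.exp (((M * θ : ℝ)) * Complex.I)).im)
    obtain ⟨hy, hyM, hMy⟩ := hyfact s hs
    refine ⟨s / M, hy, ?_⟩
    exact hcore s (s / M) hy hyM hMy Complex.im (fun a b => Complex.add_im a b)
      (fun r w => Complex.im_ofReal_mul r w)
      (fun a b => by rw [← Complex.sub_im]; exact Complex.abs_im_le_norm _) hosc

/-- Non-differentiability criterion. -/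
lemma not_differentiableAt {u : ℝ → ℝ} {θ : ℝ}
    (hu : ∀ n : ℕ, 0 < n → ∃ y ∈ Set.Ioo θ (θ + 1 / (n : ℝ)),
      (n : ℝ) * |y - θ| < |u y - u θ|) :
    ¬ DifferentiableAt ℝ u θ := by
  intro hd
  obtain ⟨c, hc⟩ := (hd.hasFDerivAt.isBigO_sub).bound
  rw [Metric.eventually_nhds_iff] at hc
  obtain ⟨r, hr, hcr⟩ := hc
  obtain ⟨n, hnc⟩ := exists_nat_gt (max c (1 / r))
  have hrn : 1 / r < (n : ℝ) := lt_of_le_of_lt (le_max_right c (1/r)) hnc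
  have hn0 : 0 < n := by
    have h0 : (0 : ℝ) < n := lt_trans (by positivity) hrn
    exact_mod_cast h0
  obtain ⟨y, hy, hosc⟩ := hu n hn0
  have hy1 : 0 < y - θ := by linarith [hy.1]
  have hy2 : y - θ < 1 / (n : ℝ) := by linarith [hy.2]
  have hinv : 1 / (n : ℝ) < r := by
    have hnpos : (0 : ℝ) < n := lt_trans (by positivity) hrn
    rw [div_lt_iff₀ hr] at hrn
    rw [div_lt_iff₀ hnpos]
    nlinarith
  have hyr : dist y θ < r := by
    rw [Real.dist_eq, abs_of_pos hy1]
    linarith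
  have := hcr hyr
  rw [Real.norm_eq_abs, Real.norm_eq_abs] at this
  have hcn : c ≤ (n : ℝ) := le_of_lt (lt_of_le_of_lt (le_max_left c (1/r)) hnc)
  have habs : |y - θ| = y - θ := abs_of_pos hy1
  nlinarith [abs_nonneg (u y - u θ)]

end NDAux

/-- Generically, for `f` in the disc algebra both the real and imaginary parts of the
boundary values `θ ↦ f(e^{iθ})` are nowhere differentiable. -/
theorem generic_nowhere_differentiable_discAlgebra :
    ∃ G : Set DiscAlgebra, IsGδ G ∧ Dense G ∧
      ∀ f ∈ G, ∀ θ : ℝ,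
        ¬ DifferentiableAt ℝ (fun t : ℝ => (bdry f t).re) θ ∧
        ¬ DifferentiableAt ℝ (fun t : ℝ => (bdry f t).im) θ := by
  classical
  refine ⟨⋂ n : ℕ, NDAux.U (n + 1), ?_, ?_, ?_⟩
  · exact IsGδ.iInter fun n => (NDAux.isOpen_U (n + 1)).isGδ
  · exact dense_iInter_of_isOpen_nat (fun n => NDAux.isOpen_U (n + 1))
      (fun n => NDAux.dense_U (Nat.succ_pos n))
  · intro f hf θ
    have hmem : ∀ n : ℕ, 0 < n → f ∈ NDAux.U n := by
      intro n hn
      have := Set.mem_iInter.mp hf (n - 1)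
      rwa [Nat.sub_add_cancel hn] at this
    constructor
    · exact NDAux.not_differentiableAt fun n hn => (NDAux.U_oscillation (hmem n hn) θ).1
    · exact NDAux.not_differentiableAt fun n hn => (NDAux.U_oscillation (hmem n hn) θ).2
end

section
/- Let I be a finite or countably infinite set. The set of functions f ∈ A(D^I) such that for every point θ ∈ ℝ^I and every direction v ∈ ℝ^I with ‖v‖_∞ = 1, neither u(θ) = Re f(e^{iθ}) nor ũ(θ) = Im f(e^{iθ}) has a directional derivative at θ in direction v (i.e. the limit of (u(θ+tv) − u(θ))/t as t → 0 does not exist in ℝ), contains a dense G_δ subset of A(D^I); in particular such functions exist. -/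
open scoped Classical

noncomputable section

variable (I : Type*)

/-- The closed unit polydisc `D̄^I ⊆ ℂ^I`, with the product topology. -/
def PolyDisc : Set (I → ℂ) := Set.univ.pi fun _ : I => Metric.closedBall (0 : ℂ) 1

instance : CompactSpace (PolyDisc I) :=
  isCompact_iff_compactSpace.mp
    (isCompact_univ_pi fun _ => isCompact_closedBall (0 : ℂ) 1)

variable {I}

/-- Extension of a continuous function on the closed polydisc by `0`. -/
def ext (f : C(PolyDisc I, ℂ)) (z : I → ℂ) : ℂ :=
  if h : z ∈ PolyDisc I then f ⟨z, h⟩ else 0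

variable (I)

/-- The polydisc algebra `A(D^I)`: functions continuous on the closed polydisc
(product topology) and separately holomorphic on the open polydisc, with the
supremum metric inherited from `C(D̄^I, ℂ)`. -/
def PolyDiscAlgebra : Type _ :=
  {f : C(PolyDisc I, ℂ) //
    ∀ (i : I) (z : I → ℂ), (∀ j, ‖z j‖ < 1) →
      DifferentiableAt ℂ (fun w : ℂ => ext f (Function.update z i w)) (z i)}

instance : MetricSpace (PolyDiscAlgebra I) :=
  inferInstanceAs (MetricSpace {f : C(PolyDisc I, ℂ) //
    ∀ (i : I) (z : I → ℂ), (∀ j, ‖z j‖ < 1) →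
      DifferentiableAt ℂ (fun w : ℂ => ext f (Function.update z i w)) (z i)})

variable {I}

lemma exp_mem_polyDisc (θ : I → ℝ) :
    (fun i => Complex.exp (θ i * Complex.I)) ∈ PolyDisc I := by
  intro i _
  simp [Metric.mem_closedBall, Complex.dist_eq, Complex.norm_exp_ofReal_mul_I]

/-- The boundary values of `f ∈ A(D^I)` on the distinguished boundary `𝕋^I`,
parametrized by `θ ∈ ℝ^I`. -/
def pbdry (f : PolyDiscAlgebra I) (θ : I → ℝ) : ℂ :=
  f.1 ⟨fun i => Complex.exp (θ i * Complex.I), exp_mem_polyDisc θ⟩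

/-- `‖v‖_∞ = 1` for `v ∈ ℝ^I`: all coordinates are bounded by `1` in absolute value,
and their supremum is `1`. -/
def SupNormOne (v : I → ℝ) : Prop :=
  (∀ i, |v i| ≤ 1) ∧ ∀ ε : ℝ, 0 < ε → ∃ i, 1 - ε < |v i|


open Filter Topology

section Aux

variable {I : Type*}

/-- The exponential map `θ ↦ (e^{iθ_j})_j` into the polydisc. -/
def emap (θ : I → ℝ) : PolyDisc I :=
  ⟨fun i => Complex.exp (θ i * Complex.I), exp_mem_polyDisc θ⟩

lemma uc_expI : UniformContinuous (fun x : ℝ => Complex.exp ((x : ℂ) * Complex.I)) := by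
  have hd : ∀ x : ℝ, HasDerivAt (fun x : ℝ => Complex.exp ((x : ℂ) * Complex.I))
      (Complex.exp ((x : ℂ) * Complex.I) * Complex.I) x := by
    intro x
    have h1 : HasDerivAt (fun z : ℂ => Complex.exp (z * Complex.I))
        (Complex.exp ((x : ℂ) * Complex.I) * Complex.I) (x : ℂ) := by
      simpa using ((hasDerivAt_id ((x : ℂ))).mul_const Complex.I).cexp
    exact h1.comp_ofReal
  have hdiff : Differentiable ℝ (fun x : ℝ => Complex.exp ((x : ℂ) * Complex.I)) :=
    fun x => (hd x).differentiableAt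
  refine (lipschitzWith_of_nnnorm_deriv_le (C := 1) hdiff fun x => ?_).uniformContinuous
  rw [(hd x).deriv]
  have : ‖Complex.exp ((x : ℂ) * Complex.I) * Complex.I‖ = 1 := by
    rw [norm_mul]
    simp [Complex.norm_exp_ofReal_mul_I]
  rw [← NNReal.coe_le_coe, coe_nnnorm, this]
  norm_num

lemma uc_emap : UniformContinuous (emap (I := I)) := by
  apply UniformContinuous.subtype_mk
  exact uniformContinuous_pi.mpr fun i => uc_expI.comp (Pi.uniformContinuous_proj _ i)

/-- Uniform modulus of continuity for boundary values: closeness of `θ` in sup norm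
implies closeness of values. -/
lemma unif_small (q : C(PolyDisc I, ℂ)) {ε : ℝ} (hε : 0 < ε) :
    ∃ δ > (0 : ℝ), ∀ θ η : I → ℝ, (∀ i, |θ i - η i| ≤ δ) →
      ‖q (emap θ) - q (emap η)‖ ≤ ε := by
  have hqc : UniformContinuous (fun θ : I → ℝ => q (emap θ)) :=
    (CompactSpace.uniformContinuous_of_continuous q.continuous).comp uc_emap
  have hF : UniformContinuous (fun θ : UniformFun I ℝ => q (emap (UniformFun.toFun θ))) :=
    hqc.comp UniformFun.uniformContinuous_toFun
  have hV : {p : ℂ × ℂ | dist p.1 p.2 < ε} ∈ uniformity ℂ := Metric.dist_mem_uniformity hε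
  have hmem := hF hV
  rw [Filter.mem_map,
    (UniformFun.hasBasis_uniformity_of_basis I ℝ Metric.uniformity_basis_dist).mem_iff] at hmem
  obtain ⟨δ, hδ, hsub⟩ := hmem
  refine ⟨δ / 2, by positivity, fun θ η h => ?_⟩
  have hg : (UniformFun.ofFun θ, UniformFun.ofFun η) ∈
      (UniformFun.gen I ℝ ∘ fun δ : ℝ => {p : ℝ × ℝ | dist p.1 p.2 < δ}) δ := by
    intro i
    show (θ i, η i) ∈ {p : ℝ × ℝ | dist p.1 p.2 < δ}
    simp only [Set.mem_setOf_eq, Real.dist_eq]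
    have := h i
    linarith
  have h2 := hsub hg
  simp only [Set.mem_preimage, Set.mem_setOf_eq] at h2
  rw [Complex.dist_eq] at h2
  exact h2.le

/-- Key trigonometric fact: from any starting phase, moving by `π/2` or `π`
changes both `cos` and `sin` by at least `1/2`. -/
lemma trig_key (φ : ℝ) : ∃ ψ : ℝ, 0 < ψ ∧ ψ ≤ Real.pi ∧
    1 / 2 ≤ |Real.cos (φ + ψ) - Real.cos φ| ∧
    1 / 2 ≤ |Real.sin (φ + ψ) - Real.sin φ| := by
  have hpi := Real.pi_pos
  have hpyth := Real.sin_sq_add_cos_sq φ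
  by_cases hc : 1 / 4 ≤ |Real.cos φ|
  · by_cases hs : 1 / 4 ≤ |Real.sin φ|
    · refine ⟨Real.pi, hpi, le_refl _, ?_, ?_⟩
      · rw [Real.cos_add_pi]
        rw [show -Real.cos φ - Real.cos φ = -(2 * Real.cos φ) by ring, abs_neg, abs_mul]
        rw [abs_two]
        linarith
      · rw [Real.sin_add_pi]
        rw [show -Real.sin φ - Real.sin φ = -(2 * Real.sin φ) by ring, abs_neg, abs_mul]
        rw [abs_two]
        linarith
    · push_neg at hs
      have hcb : 3 / 4 ≤ |Real.cos φ| := by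
        nlinarith [sq_abs (Real.sin φ), sq_abs (Real.cos φ), abs_nonneg (Real.cos φ),
          abs_nonneg (Real.sin φ)]
      refine ⟨Real.pi / 2, by linarith, by linarith, ?_, ?_⟩
      · rw [Real.cos_add_pi_div_two]
        have h1 : |Real.cos φ| - |Real.sin φ| ≤ |-Real.sin φ - Real.cos φ| := by
          have := abs_sub_abs_le_abs_sub (-Real.cos φ) (Real.sin φ)
          rw [abs_neg] at this
          calc |Real.cos φ| - |Real.sin φ| ≤ |-Real.cos φ - Real.sin φ| := this
            _ = |-Real.sin φ - Real.cos φ| := by ring_nf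
        linarith
      · rw [Real.sin_add_pi_div_two]
        have h1 : |Real.cos φ| - |Real.sin φ| ≤ |Real.cos φ - Real.sin φ| :=
          abs_sub_abs_le_abs_sub _ _
        linarith
  · push_neg at hc
    have hsb : 3 / 4 ≤ |Real.sin φ| := by
      nlinarith [sq_abs (Real.sin φ), sq_abs (Real.cos φ), abs_nonneg (Real.cos φ),
        abs_nonneg (Real.sin φ)]
    refine ⟨Real.pi / 2, by linarith, by linarith, ?_, ?_⟩
    · rw [Real.cos_add_pi_div_two]
      have h1 : |Real.sin φ| - |Real.cos φ| ≤ |-Real.sin φ - Real.cos φ| := by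
        have := abs_sub_abs_le_abs_sub (-Real.sin φ) (Real.cos φ)
        rw [abs_neg] at this
        linarith
      linarith
    · rw [Real.sin_add_pi_div_two]
      have h1 : |Real.sin φ| - |Real.cos φ| ≤ |Real.cos φ - Real.sin φ| := by
        have := abs_sub_abs_le_abs_sub (Real.sin φ) (Real.cos φ)
        rw [abs_sub_comm] at this
        linarith
      linarith

lemma ext_add (q r : C(PolyDisc I, ℂ)) (z : I → ℂ) :
    ext (q + r) z = ext q z + ext r z := by
  unfold ext
  split <;> simp

lemma ext_smul (c : ℂ) (q : C(PolyDisc I, ℂ)) (z : I → ℂ) :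
    ext (c • q) z = c * ext q z := by
  unfold ext
  split <;> simp

lemma mem_polyDisc_update {z : I → ℂ} (hz : ∀ j, ‖z j‖ < 1) (i : I) {w : ℂ}
    (hw : ‖w‖ ≤ 1) : Function.update z i w ∈ PolyDisc I := by
  intro j _
  simp only [Metric.mem_closedBall, Complex.dist_eq, sub_zero]
  rcases eq_or_ne j i with rfl | h
  · rwa [Function.update_self]
  · rw [Function.update_of_ne h]; exact (hz j).le

/-- The monomial `z ↦ z_i^M` as a continuous map on the polydisc. -/
def mon (i : I) (M : ℕ) : C(PolyDisc I, ℂ) :=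
  ⟨fun z => (z.1 i) ^ M, ((continuous_apply i).comp continuous_subtype_val).pow M⟩

/-- Perturbation of `f` by `c z_i^M`. -/
def pert (f : PolyDiscAlgebra I) (c : ℝ) (i : I) (M : ℕ) : PolyDiscAlgebra I :=
  ⟨f.1 + (c : ℂ) • mon i M, by
    intro i' z hz
    have hev : ∀ᶠ w in nhds (z i'), ‖w‖ ≤ 1 := by
      have hmem : Metric.ball (0 : ℂ) 1 ∈ nhds (z i') :=
        Metric.isOpen_ball.mem_nhds (by
          rw [mem_ball_zero_iff]
          simpa using hz i')
      filter_upwards [hmem] with w hw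
      rw [mem_ball_zero_iff] at hw
      simpa using hw.le
    have hmon : DifferentiableAt ℂ (fun w => ext (mon i M) (Function.update z i' w)) (z i') := by
      have heq : (fun w => ext (mon i M) (Function.update z i' w)) =ᶠ[nhds (z i')]
          (fun w => (Function.update z i' w i) ^ M) := by
        filter_upwards [hev] with w hw
        rw [ext, dif_pos (mem_polyDisc_update hz i' hw)]
        rfl
      rw [heq.differentiableAt_iff]
      rcases eq_or_ne i i' with rfl | hne
      · simp only [Function.update_self]
        exact differentiableAt_pow M
      · simp only [Function.update_of_ne hne]
        exact differentiableAt_const _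
    have hsum := (f.2 i' z hz).add (hmon.const_mul (c : ℂ))
    refine hsum.congr_of_eventuallyEq (Eventually.of_forall fun w => ?_)
    show ext (f.1 + (c : ℂ) • mon i M) (Function.update z i' w) = _
    rw [ext_add, ext_smul]; rfl⟩

lemma pbdry_pert (f : PolyDiscAlgebra I) (c : ℝ) (i : I) (M : ℕ) (θ : I → ℝ) :
    pbdry (pert f c i M) θ =
      pbdry f θ + (c : ℂ) * Complex.exp (((M * θ i : ℝ) : ℂ) * Complex.I) := by
  have hexp : (Complex.exp ((θ i : ℂ) * Complex.I)) ^ M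
      = Complex.exp (((M * θ i : ℝ) : ℂ) * Complex.I) := by
    rw [← Complex.exp_nat_mul]
    congr 1
    push_cast
    ring
  show (f.1 + (c : ℂ) • mon i M) _ = _
  rw [ContinuousMap.add_apply, ContinuousMap.smul_apply]
  rw [smul_eq_mul]
  congr 1
  rw [← hexp]
  rfl

lemma dist_pert_le (f : PolyDiscAlgebra I) {c : ℝ} (hc : 0 ≤ c) (i : I) (M : ℕ) :
    dist (pert f c i M) f ≤ c := by
  change dist (pert f c i M).1 f.1 ≤ c
  refine (ContinuousMap.dist_le hc).mpr fun x => ?_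
  show dist ((f.1 + (c : ℂ) • mon i M) x) (f.1 x) ≤ c
  rw [ContinuousMap.add_apply, ContinuousMap.smul_apply, Complex.dist_eq]
  rw [add_sub_cancel_left]
  rw [smul_eq_mul, norm_mul]
  have h1 : ‖(mon i M) x‖ ≤ 1 := by
    show ‖(x.1 i) ^ M‖ ≤ 1
    rw [norm_pow]
    refine pow_le_one₀ (norm_nonneg _) ?_
    have := x.2 i (Set.mem_univ i)
    simpa [Complex.dist_eq] using this
  have h2 : ‖(c : ℂ)‖ = |c| := by simp
  rw [h2, abs_of_nonneg hc]
  nlinarith [norm_nonneg ((mon i M) x)]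

lemma pbdry_dist_le (f g : PolyDiscAlgebra I) (θ : I → ℝ) :
    ‖pbdry f θ - pbdry g θ‖ ≤ dist f g := by
  rw [← Complex.dist_eq]
  change dist (pbdry f θ) (pbdry g θ) ≤ dist f.1 g.1
  exact ContinuousMap.dist_apply_le_dist _

/-- The basic oscillation condition. -/
def Ucond (n : ℕ) (i : I) (f : PolyDiscAlgebra I) : Prop :=
  ∀ θ v : I → ℝ, (∀ j, |v j| ≤ 1) → 1 / 2 ≤ |v i| →
    ∃ t : ℝ, 0 < |t| ∧ |t| < 1 / ((n : ℝ) + 1) ∧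
      ((n : ℝ) + 1) * |t| < |(pbdry f (θ + t • v) - pbdry f θ).re| ∧
      ((n : ℝ) + 1) * |t| < |(pbdry f (θ + t • v) - pbdry f θ).im|

lemma core (n : ℕ) (i : I) (f : PolyDiscAlgebra I) {c : ℝ} (hc : 0 < c) :
    ∃ g : PolyDiscAlgebra I, dist g f ≤ c ∧
      ∀ g' : PolyDiscAlgebra I, dist g' g < c / 16 → Ucond n i g' := by
  have hpi := Real.pi_pos
  obtain ⟨δ, hδ, hA⟩ := unif_small f.1 (show (0 : ℝ) < c / 16 by positivity)
  obtain ⟨M, hM⟩ := exists_nat_gt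
    (max (max (2 * Real.pi / δ) (32 * Real.pi * ((n : ℝ) + 1) / c)) (4 * Real.pi * ((n : ℝ) + 1)))
  have hn1 : (0 : ℝ) < (n : ℝ) + 1 := by positivity
  have hMpos : (0 : ℝ) < (M : ℝ) := by
    refine lt_of_le_of_lt ?_ hM
    have : (0 : ℝ) ≤ 4 * Real.pi * ((n : ℝ) + 1) := by positivity
    exact le_trans this (le_max_right _ _)
  have hM1 : 2 * Real.pi / (M : ℝ) ≤ δ := by
    have hA' : 2 * Real.pi / δ < (M : ℝ) :=
      lt_of_le_of_lt (le_trans (le_max_left _ _) (le_max_left _ _)) hM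
    rw [div_le_iff₀ hMpos]
    have := (div_lt_iff₀ hδ).mp hA'
    nlinarith
  have hM2 : ((n : ℝ) + 1) * (2 * Real.pi / (M : ℝ)) < c / 16 := by
    have hA' : 32 * Real.pi * ((n : ℝ) + 1) / c < (M : ℝ) :=
      lt_of_le_of_lt (le_trans (le_max_right _ _) (le_max_left _ _)) hM
    have h32 : 32 * Real.pi * ((n : ℝ) + 1) < (M : ℝ) * c := by
      have := (div_lt_iff₀ hc).mp hA'
      linarith
    rw [show ((n : ℝ) + 1) * (2 * Real.pi / (M : ℝ)) = ((n : ℝ) + 1) * (2 * Real.pi) / (M : ℝ) by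
      ring]
    rw [div_lt_iff₀ hMpos]
    nlinarith
  have hM3 : 2 * Real.pi / (M : ℝ) < 1 / ((n : ℝ) + 1) := by
    have hA' : 4 * Real.pi * ((n : ℝ) + 1) < (M : ℝ) := lt_of_le_of_lt (le_max_right _ _) hM
    rw [div_lt_div_iff₀ hMpos hn1]
    nlinarith
  refine ⟨pert f c i M, dist_pert_le f hc.le i M, ?_⟩
  intro g' hg' θ v hv hvi
  obtain ⟨ψ, hψ0, hψπ, hcos, hsin⟩ := trig_key ((M : ℝ) * θ i)
  have hvi0 : v i ≠ 0 := by
    intro h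
    rw [h, abs_zero] at hvi
    linarith
  have hvabs : (0 : ℝ) < |v i| := abs_pos.mpr hvi0
  set t : ℝ := ψ / ((M : ℝ) * v i) with ht_def
  have ht0 : t ≠ 0 := div_ne_zero hψ0.ne' (mul_ne_zero hMpos.ne' hvi0)
  have habs_t : |t| ≤ 2 * Real.pi / (M : ℝ) := by
    rw [ht_def, abs_div, abs_mul, abs_of_pos hψ0, abs_of_pos hMpos]
    rw [div_le_div_iff₀ (by positivity) hMpos]
    nlinarith [mul_le_mul_of_nonneg_right hψπ hMpos.le,
      mul_le_mul_of_nonneg_left hvi (by positivity : (0:ℝ) ≤ 2 * Real.pi * (M : ℝ))]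
  have h0t : 0 < |t| := abs_pos.mpr ht0
  set x1 : I → ℝ := θ + t • v with hx1
  have hxi : (M : ℝ) * x1 i = (M : ℝ) * θ i + ψ := by
    rw [hx1]
    simp only [Pi.add_apply, Pi.smul_apply, smul_eq_mul]
    rw [ht_def]
    field_simp
  have hcoord : ∀ j, |x1 j - θ j| ≤ δ := by
    intro j
    rw [hx1]
    simp only [Pi.add_apply, Pi.smul_apply, smul_eq_mul, add_sub_cancel_left]
    rw [abs_mul]
    calc |t| * |v j| ≤ |t| * 1 := by
          exact mul_le_mul_of_nonneg_left (hv j) (abs_nonneg t)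
      _ = |t| := mul_one _
      _ ≤ 2 * Real.pi / (M : ℝ) := habs_t
      _ ≤ δ := hM1
  have hΔf : ‖pbdry f x1 - pbdry f θ‖ ≤ c / 16 := by
    have : pbdry f x1 = f.1 (emap x1) := rfl
    rw [this, show pbdry f θ = f.1 (emap θ) from rfl]
    exact hA x1 θ hcoord
  have hE1 : ‖pbdry g' x1 - pbdry (pert f c i M) x1‖ < c / 16 :=
    lt_of_le_of_lt (pbdry_dist_le _ _ _) hg'
  have hE0 : ‖pbdry g' θ - pbdry (pert f c i M) θ‖ < c / 16 :=
    lt_of_le_of_lt (pbdry_dist_le _ _ _) hg'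
  have hz : pbdry g' x1 - pbdry g' θ =
      (c : ℂ) * (Complex.exp ((((M : ℝ) * θ i + ψ : ℝ) : ℂ) * Complex.I)
        - Complex.exp ((((M : ℝ) * θ i : ℝ) : ℂ) * Complex.I))
      + ((pbdry f x1 - pbdry f θ)
      + ((pbdry g' x1 - pbdry (pert f c i M) x1) - (pbdry g' θ - pbdry (pert f c i M) θ))) := by
    have e1 := pbdry_pert f c i M x1
    have e0 := pbdry_pert f c i M θ
    rw [hxi] at e1
    rw [e1, e0]
    ring
  have hnt : ((n : ℝ) + 1) * |t| < c / 16 := by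
    calc ((n : ℝ) + 1) * |t| ≤ ((n : ℝ) + 1) * (2 * Real.pi / (M : ℝ)) :=
          mul_le_mul_of_nonneg_left habs_t hn1.le
      _ < c / 16 := hM2
  refine ⟨t, h0t, lt_of_le_of_lt habs_t hM3, ?_, ?_⟩
  · -- real part
    have hre : (pbdry g' x1 - pbdry g' θ).re =
        c * (Real.cos ((M : ℝ) * θ i + ψ) - Real.cos ((M : ℝ) * θ i))
        + ((pbdry f x1 - pbdry f θ).re
        + ((pbdry g' x1 - pbdry (pert f c i M) x1).re
          - (pbdry g' θ - pbdry (pert f c i M) θ).re)) := by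
      rw [hz]
      simp only [Complex.add_re, Complex.sub_re, Complex.mul_re, Complex.ofReal_re,
        Complex.ofReal_im, Complex.exp_ofReal_mul_I_re, Complex.exp_ofReal_mul_I_im]
      ring
    set D := (pbdry g' x1 - pbdry g' θ).re
    set a := (pbdry f x1 - pbdry f θ).re
        + ((pbdry g' x1 - pbdry (pert f c i M) x1).re
          - (pbdry g' θ - pbdry (pert f c i M) θ).re) with ha_def
    have haa : |a| ≤ 3 * (c / 16) := by
      have b1 : |(pbdry f x1 - pbdry f θ).re| ≤ c / 16 :=
        le_trans (Complex.abs_re_le_norm _) hΔf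
      have b2 : |(pbdry g' x1 - pbdry (pert f c i M) x1).re| ≤ c / 16 :=
        le_trans (Complex.abs_re_le_norm _) hE1.le
      have b3 : |(pbdry g' θ - pbdry (pert f c i M) θ).re| ≤ c / 16 :=
        le_trans (Complex.abs_re_le_norm _) hE0.le
      calc |a| ≤ |(pbdry f x1 - pbdry f θ).re|
            + |((pbdry g' x1 - pbdry (pert f c i M) x1).re
              - (pbdry g' θ - pbdry (pert f c i M) θ).re)| := abs_add_le _ _
        _ ≤ |(pbdry f x1 - pbdry f θ).re|
            + (|(pbdry g' x1 - pbdry (pert f c i M) x1).re|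
              + |(pbdry g' θ - pbdry (pert f c i M) θ).re|) := by
              have := abs_sub ((pbdry g' x1 - pbdry (pert f c i M) x1).re)
                ((pbdry g' θ - pbdry (pert f c i M) θ).re)
              linarith
        _ ≤ 3 * (c / 16) := by linarith
    have hd : D = c * (Real.cos ((M : ℝ) * θ i + ψ) - Real.cos ((M : ℝ) * θ i)) + a := hre
    have hcd : c / 2 ≤ |c * (Real.cos ((M : ℝ) * θ i + ψ) - Real.cos ((M : ℝ) * θ i))| := by
      rw [abs_mul, abs_of_pos hc]
      have := mul_le_mul_of_nonneg_left hcos hc.le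
      linarith
    have htri : |c * (Real.cos ((M : ℝ) * θ i + ψ) - Real.cos ((M : ℝ) * θ i))| ≤ |D| + |a| := by
      have : c * (Real.cos ((M : ℝ) * θ i + ψ) - Real.cos ((M : ℝ) * θ i)) = D + (-a) := by
        rw [hd]; ring
      rw [this]
      calc |D + (-a)| ≤ |D| + |(-a)| := abs_add_le _ _
        _ = |D| + |a| := by rw [abs_neg]
    have hD : 5 * (c / 16) ≤ |D| := by linarith
    calc ((n : ℝ) + 1) * |t| < c / 16 := hnt
      _ ≤ 5 * (c / 16) := by linarith
      _ ≤ |D| := hD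
  · -- imaginary part
    have hre : (pbdry g' x1 - pbdry g' θ).im =
        c * (Real.sin ((M : ℝ) * θ i + ψ) - Real.sin ((M : ℝ) * θ i))
        + ((pbdry f x1 - pbdry f θ).im
        + ((pbdry g' x1 - pbdry (pert f c i M) x1).im
          - (pbdry g' θ - pbdry (pert f c i M) θ).im)) := by
      rw [hz]
      simp only [Complex.add_im, Complex.sub_im, Complex.mul_im, Complex.ofReal_re,
        Complex.ofReal_im, Complex.exp_ofReal_mul_I_re, Complex.exp_ofReal_mul_I_im]
      ring
    set D := (pbdry g' x1 - pbdry g' θ).im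
    set a := (pbdry f x1 - pbdry f θ).im
        + ((pbdry g' x1 - pbdry (pert f c i M) x1).im
          - (pbdry g' θ - pbdry (pert f c i M) θ).im) with ha_def
    have haa : |a| ≤ 3 * (c / 16) := by
      have b1 : |(pbdry f x1 - pbdry f θ).im| ≤ c / 16 :=
        le_trans (Complex.abs_im_le_norm _) hΔf
      have b2 : |(pbdry g' x1 - pbdry (pert f c i M) x1).im| ≤ c / 16 :=
        le_trans (Complex.abs_im_le_norm _) hE1.le
      have b3 : |(pbdry g' θ - pbdry (pert f c i M) θ).im| ≤ c / 16 :=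
        le_trans (Complex.abs_im_le_norm _) hE0.le
      calc |a| ≤ |(pbdry f x1 - pbdry f θ).im|
            + |((pbdry g' x1 - pbdry (pert f c i M) x1).im
              - (pbdry g' θ - pbdry (pert f c i M) θ).im)| := abs_add_le _ _
        _ ≤ |(pbdry f x1 - pbdry f θ).im|
            + (|(pbdry g' x1 - pbdry (pert f c i M) x1).im|
              + |(pbdry g' θ - pbdry (pert f c i M) θ).im|) := by
              have := abs_sub ((pbdry g' x1 - pbdry (pert f c i M) x1).im)
                ((pbdry g' θ - pbdry (pert f c i M) θ).im)
              linarith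
        _ ≤ 3 * (c / 16) := by linarith
    have hd : D = c * (Real.sin ((M : ℝ) * θ i + ψ) - Real.sin ((M : ℝ) * θ i)) + a := hre
    have hcd : c / 2 ≤ |c * (Real.sin ((M : ℝ) * θ i + ψ) - Real.sin ((M : ℝ) * θ i))| := by
      rw [abs_mul, abs_of_pos hc]
      have := mul_le_mul_of_nonneg_left hsin hc.le
      linarith
    have htri : |c * (Real.sin ((M : ℝ) * θ i + ψ) - Real.sin ((M : ℝ) * θ i))| ≤ |D| + |a| := by
      have : c * (Real.sin ((M : ℝ) * θ i + ψ) - Real.sin ((M : ℝ) * θ i)) = D + (-a) := by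
        rw [hd]; ring
      rw [this]
      calc |D + (-a)| ≤ |D| + |(-a)| := abs_add_le _ _
        _ = |D| + |a| := by rw [abs_neg]
    have hD : 5 * (c / 16) ≤ |D| := by linarith
    calc ((n : ℝ) + 1) * |t| < c / 16 := hnt
      _ ≤ 5 * (c / 16) := by linarith
      _ ≤ |D| := hD

lemma dense_int (n : ℕ) (i : I) :
    Dense (interior {f : PolyDiscAlgebra I | Ucond n i f}) := by
  rw [Metric.dense_iff]
  intro f r hr
  obtain ⟨g, hdist, hball⟩ := core n i f (show (0 : ℝ) < r / 2 by positivity)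
  refine ⟨g, ?_, ?_⟩
  · rw [Metric.mem_ball]
    calc dist g f ≤ r / 2 := hdist
      _ < r := by linarith
  · rw [mem_interior_iff_mem_nhds, Metric.mem_nhds_iff]
    exact ⟨r / 2 / 16, by positivity, fun g' hg' => hball g' (Metric.mem_ball.mp hg')⟩

lemma isClosed_algebraSet :
    IsClosed {f : C(PolyDisc I, ℂ) | ∀ (i : I) (z : I → ℂ), (∀ j, ‖z j‖ < 1) →
      DifferentiableAt ℂ (fun w : ℂ => ext f (Function.update z i w)) (z i)} := by
  refine isClosed_of_closure_subset fun f hf => ?_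
  intro i z hz
  obtain ⟨g, hgmem, hgtend⟩ := mem_closure_iff_seq_limit.mp hf
  have hslice : ∀ k, DifferentiableOn ℂ (fun w => ext (g k) (Function.update z i w))
      (Metric.ball (0 : ℂ) 1) := by
    intro k w hw
    have hw1 : ‖w‖ < 1 := by
      rw [mem_ball_zero_iff] at hw
      simpa using hw
    have hz' : ∀ j, ‖Function.update z i w j‖ < 1 := by
      intro j
      rcases eq_or_ne j i with rfl | h
      · rwa [Function.update_self]
      · rw [Function.update_of_ne h]; exact hz j
    have hd := hgmem k i (Function.update z i w) hz'
    rw [Function.update_self] at hd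
    simp only [Function.update_idem] at hd
    exact hd.differentiableWithinAt
  have htu : TendstoUniformlyOn (fun k w => ext (g k) (Function.update z i w))
      (fun w => ext f (Function.update z i w)) atTop (Metric.ball (0 : ℂ) 1) := by
    rw [Metric.tendstoUniformlyOn_iff]
    intro ε hε
    obtain ⟨N, hN⟩ := Metric.tendsto_atTop.mp hgtend ε hε
    refine eventually_atTop.mpr ⟨N, fun k hk w hw => ?_⟩
    have hw1 : ‖w‖ ≤ 1 := by
      rw [mem_ball_zero_iff] at hw
      simpa using hw.le
    have hupd : Function.update z i w ∈ PolyDisc I := mem_polyDisc_update hz i hw1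
    rw [ext, dif_pos hupd, ext, dif_pos hupd]
    calc dist (f ⟨_, hupd⟩) ((g k) ⟨_, hupd⟩) ≤ dist f (g k) :=
          ContinuousMap.dist_apply_le_dist _
      _ = dist (g k) f := dist_comm _ _
      _ < ε := hN k hk
  have hdiff := htu.tendstoLocallyUniformlyOn.differentiableOn
    (Eventually.of_forall hslice) Metric.isOpen_ball
  have hzi : z i ∈ Metric.ball (0 : ℂ) 1 := by
    rw [mem_ball_zero_iff]
    simpa using hz i
  exact hdiff.differentiableAt (Metric.isOpen_ball.mem_nhds hzi)

instance : CompleteSpace (PolyDiscAlgebra I) :=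
  (isClosed_algebraSet (I := I)).completeSpace_coe

end Aux

open Filter in
/-- Generically, for `f` in the polydisc algebra (`I` finite or countably infinite),
neither the real nor the imaginary part of the boundary values has a directional
derivative at any point `θ ∈ ℝ^I` in any direction `v` with `‖v‖_∞ = 1`. -/
theorem generic_no_directional_derivative (I : Type*) [Countable I] :
    ∃ G : Set (PolyDiscAlgebra I), IsGδ G ∧ Dense G ∧
      ∀ f ∈ G, ∀ θ v : I → ℝ, SupNormOne v →
        (¬ ∃ L : ℝ, Tendsto
          (fun t : ℝ => ((pbdry f (θ + t • v)).re - (pbdry f θ).re) / t)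
          (nhdsWithin 0 {0}ᶜ) (nhds L)) ∧
        (¬ ∃ L : ℝ, Tendsto
          (fun t : ℝ => ((pbdry f (θ + t • v)).im - (pbdry f θ).im) / t)
          (nhdsWithin 0 {0}ᶜ) (nhds L)) := by
  classical
  refine ⟨⋂ p : ℕ × I, interior {f : PolyDiscAlgebra I | Ucond p.1 p.2 f}, ?_, ?_, ?_⟩
  · exact IsGδ.iInter fun p => isOpen_interior.isGδ
  · exact dense_iInter_of_isOpen (fun p => isOpen_interior) (fun p => dense_int p.1 p.2)
  · intro f hf θ v hsv
    obtain ⟨i, hi⟩ := hsv.2 (1 / 2) (by norm_num)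
    have hvi : 1 / 2 ≤ |v i| := by linarith
    have hv := hsv.1
    have hU : ∀ n : ℕ, Ucond n i f := fun n =>
      interior_subset (Set.mem_iInter.mp hf (n, i))
    choose t h0 h1 h2 h3 using fun n => hU n θ v hv hvi
    have htnz : ∀ n, t n ≠ 0 := fun n => abs_pos.mp (h0 n)
    have htend0 : Tendsto t atTop (nhds 0) := by
      apply squeeze_zero_norm (fun n => ?_) tendsto_one_div_add_atTop_nhds_zero_nat
      rw [Real.norm_eq_abs]
      exact (h1 n).le
    have htend : Tendsto t atTop (nhdsWithin 0 {0}ᶜ) :=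
      tendsto_nhdsWithin_of_tendsto_nhds_of_eventually_within _ htend0
        (Eventually.of_forall fun n => htnz n)
    constructor
    · rintro ⟨L, hL⟩
      have hq := hL.comp htend
      have habs : Tendsto (fun n => |((pbdry f (θ + t n • v)).re - (pbdry f θ).re) / t n|)
          atTop (nhds |L|) := hq.abs
      have hbd := habs.eventually_lt_const (show |L| < |L| + 1 by linarith)
      obtain ⟨N, hN⟩ := eventually_atTop.mp hbd
      obtain ⟨m, hm⟩ := exists_nat_gt (|L| + 1)
      set n := max N m with hn
      have hge : ((n : ℝ)) + 1 > |L| + 1 := by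
        have : (m : ℝ) ≤ (n : ℝ) := by exact_mod_cast Nat.cast_le.mpr (le_max_right N m)
        linarith
      have hquot : ((n : ℝ) + 1) < |((pbdry f (θ + t n • v)).re - (pbdry f θ).re) / t n| := by
        rw [abs_div]
        rw [lt_div_iff₀ (h0 n)]
        have := h2 n
        rw [Complex.sub_re] at this
        linarith
      have := hN n (le_max_left N m)
      linarith
    · rintro ⟨L, hL⟩
      have hq := hL.comp htend
      have habs : Tendsto (fun n => |((pbdry f (θ + t n • v)).im - (pbdry f θ).im) / t n|)
          atTop (nhds |L|) := hq.abs
      have hbd := habs.eventually_lt_const (show |L| < |L| + 1 by linarith)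
      obtain ⟨N, hN⟩ := eventually_atTop.mp hbd
      obtain ⟨m, hm⟩ := exists_nat_gt (|L| + 1)
      set n := max N m with hn
      have hge : ((n : ℝ)) + 1 > |L| + 1 := by
        have : (m : ℝ) ≤ (n : ℝ) := by exact_mod_cast Nat.cast_le.mpr (le_max_right N m)
        linarith
      have hquot : ((n : ℝ) + 1) < |((pbdry f (θ + t n • v)).im - (pbdry f θ).im) / t n| := by
        rw [abs_div]
        rw [lt_div_iff₀ (h0 n)]
        have := h3 n
        rw [Complex.sub_im] at this
        linarith
      have := hN n (le_max_left N m)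
      linarith
end
end
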